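/- arXiv:1402.4618 — 8 statements merged into one kernel-verified Lean document; each statement's English description precedes it below -/
import Mathlib

section
/- Let D be a generator matrix on a finite set X such that every entry of the matrix exponential exp(D) is strictly positive, and let u : X → ℝ. Then there exist Λ ∈ ℝ and a strictly positive vector v : X → (0,∞) such that (D + I_u) v = Λ v; moreover every complex eigenvalue λ of D + I_u satisfies Re(λ) ≤ Λ. -/
open Finset Nat

namespace PFstmt1

variable {X : Type*} [Fintype X] [DecidableEq X]




section NormedStuff

theorem hasSum_exp_entry (A : Matrix X X ℝ) (i j : X) :
    HasSum (fun n : ℕ => (n ! : ℝ)⁻¹ * (A ^ n) i j) (NormedSpace.exp A i j) := by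
  letI : SeminormedRing (Matrix X X ℝ) := Matrix.linftyOpSemiNormedRing
  letI : NormedRing (Matrix X X ℝ) := Matrix.linftyOpNormedRing
  letI : NormedAlgebra ℝ (Matrix X X ℝ) := Matrix.linftyOpNormedAlgebra
  have h := NormedSpace.exp_series_hasSum_exp' (𝕂 := ℝ) A
  let L : Matrix X X ℝ →ₗ[ℝ] ℝ :=
    { toFun := fun M => M i j
      map_add' := fun _ _ => rfl
      map_smul' := fun _ _ => rfl }
  have hL : Continuous L := L.continuous_of_finiteDimensional
  have := h.map (L.toAddMonoidHom) hL
  convert this using 1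
  · funext n; rfl
  · rfl

theorem hasSum_exp_mulVec {𝕂 : Type*} [RCLike 𝕂] (A : Matrix X X 𝕂) (v : X → 𝕂) :
    HasSum (fun n : ℕ => (n ! : 𝕂)⁻¹ • (A ^ n).mulVec v)
      ((NormedSpace.exp A).mulVec v) := by
  letI : SeminormedRing (Matrix X X 𝕂) := Matrix.linftyOpSemiNormedRing
  letI : NormedRing (Matrix X X 𝕂) := Matrix.linftyOpNormedRing
  letI : NormedAlgebra 𝕂 (Matrix X X 𝕂) := Matrix.linftyOpNormedAlgebra
  have hc : CompleteSpace (Matrix X X 𝕂) := FiniteDimensional.complete 𝕂 _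
  have h := @NormedSpace.exp_series_hasSum_exp' 𝕂 (Matrix X X 𝕂) _ _ _ _ _ hc A
  let L : Matrix X X 𝕂 →ₗ[𝕂] (X → 𝕂) :=
    { toFun := fun M => M.mulVec v
      map_add' := fun M N => Matrix.add_mulVec M N v
      map_smul' := fun c M => Matrix.smul_mulVec c M v }
  have hL : Continuous L := L.continuous_of_finiteDimensional
  have h2 := h.map (L.toAddMonoidHom) hL
  have heq : ((fun M : Matrix X X 𝕂 => M.mulVec v) ∘ fun n : ℕ => (n ! : 𝕂)⁻¹ • A ^ n)
      = fun n : ℕ => (n ! : 𝕂)⁻¹ • (A ^ n).mulVec v :=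
    funext fun n => Matrix.smul_mulVec _ _ _
  rw [← heq]; exact h2

end NormedStuff





theorem exp_mulVec_eigen {𝕂 : Type*} [RCLike 𝕂] (A : Matrix X X 𝕂) (v : X → 𝕂) (lam : 𝕂)
    (hasSum_mv : HasSum (fun n : ℕ => (n ! : 𝕂)⁻¹ • (A ^ n).mulVec v)
      ((NormedSpace.exp A).mulVec v))
    (h : A.mulVec v = lam • v) :
    (NormedSpace.exp A).mulVec v = NormedSpace.exp lam • v := by
  have hpow : ∀ n : ℕ, (A ^ n).mulVec v = lam ^ n • v := by
    intro n
    induction n with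
    | zero => simp [Matrix.one_mulVec]
    | succ n ih =>
        rw [pow_succ, ← Matrix.mulVec_mulVec, h, Matrix.mulVec_smul, ih, smul_smul]
        exact congrArg (· • v) (pow_succ' lam n).symm
  have h2 : HasSum (fun n : ℕ => (n ! : 𝕂)⁻¹ • lam ^ n) (NormedSpace.exp lam) :=
    NormedSpace.exp_series_hasSum_exp' lam
  have h3 := h2.smul_const v
  have heq : (fun n : ℕ => ((n ! : 𝕂)⁻¹ • lam ^ n) • v)
      = fun n : ℕ => (n ! : 𝕂)⁻¹ • (A ^ n).mulVec v := by
    funext n; rw [hpow n, smul_smul, smul_eq_mul]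
  rw [heq] at h3
  exact hasSum_mv.unique h3

theorem exp_add_smul_one (A : Matrix X X ℝ) (c : ℝ) :
    NormedSpace.exp (A + c • 1) = Real.exp c • NormedSpace.exp A := by
  have h2 : NormedSpace.exp (algebraMap ℝ (Matrix X X ℝ) c)
      = algebraMap ℝ (Matrix X X ℝ) (NormedSpace.exp c) := by
    letI : SeminormedRing (Matrix X X ℝ) := Matrix.linftyOpSemiNormedRing
    letI : NormedRing (Matrix X X ℝ) := Matrix.linftyOpNormedRing
    letI : NormedAlgebra ℝ (Matrix X X ℝ) := Matrix.linftyOpNormedAlgebra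
    exact (NormedSpace.algebraMap_exp_comm c).symm
  letI : SeminormedRing (Matrix X X ℝ) := Matrix.linftyOpSemiNormedRing
  letI : NormedRing (Matrix X X ℝ) := Matrix.linftyOpNormedRing
  letI : NormedAlgebra ℝ (Matrix X X ℝ) := Matrix.linftyOpNormedAlgebra
  have hc : Commute A (c • 1 : Matrix X X ℝ) := (Commute.one_right A).smul_right c
  rw [Matrix.exp_add_of_commute _ _ hc]
  have h1 : (c • 1 : Matrix X X ℝ) = algebraMap ℝ (Matrix X X ℝ) c :=
    (Algebra.algebraMap_eq_smul_one c).symm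
  rw [h1, h2, Algebra.algebraMap_eq_smul_one,
    mul_smul_comm, mul_one, ← Real.exp_eq_exp_ℝ]

theorem exp_map_ofReal (A : Matrix X X ℝ) :
    NormedSpace.exp (A.map Complex.ofReal) = (NormedSpace.exp A).map Complex.ofReal := by
  letI : SeminormedRing (Matrix X X ℝ) := Matrix.linftyOpSemiNormedRing
  letI : NormedRing (Matrix X X ℝ) := Matrix.linftyOpNormedRing
  letI : NormedAlgebra ℝ (Matrix X X ℝ) := Matrix.linftyOpNormedAlgebra
  letI : SeminormedRing (Matrix X X ℂ) := Matrix.linftyOpSemiNormedRing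
  letI : NormedRing (Matrix X X ℂ) := Matrix.linftyOpNormedRing
  letI : NormedAlgebra ℝ (Matrix X X ℂ) := Matrix.linftyOpNormedAlgebra
  letI : NormedAlgebra ℂ (Matrix X X ℂ) := Matrix.linftyOpNormedAlgebra
  letI : NormedAlgebra ℚ (Matrix X X ℝ) := Matrix.linftyOpNormedAlgebra
  have hcont : Continuous ((Complex.ofRealHom.mapMatrix : Matrix X X ℝ →+* Matrix X X ℂ)) := by
    show Continuous fun M : Matrix X X ℝ => M.map Complex.ofReal
    exact continuous_pi fun i => continuous_pi fun j =>
      Complex.continuous_ofReal.comp ((continuous_apply j).comp (continuous_apply i))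
  have h := NormedSpace.map_exp Complex.ofRealHom.mapMatrix hcont A
  have h2 : (NormedSpace.exp (A.map Complex.ofReal) : Matrix X X ℂ)
      = NormedSpace.exp (A.map Complex.ofReal) := by
    rfl
  rw [← h2]
  exact h.symm





theorem pow_entry_nonneg {M : Matrix X X ℝ} (hM : ∀ i j, 0 ≤ M i j) :
    ∀ (n : ℕ) (i j : X), 0 ≤ (M ^ n) i j := by
  intro n
  induction n with
  | zero => intro i j; rw [pow_zero]; by_cases h : i = j <;> simp [Matrix.one_apply, h]
  | succ n ih =>
      intro i j
      rw [pow_succ, Matrix.mul_apply]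
      exact Finset.sum_nonneg fun l _ => mul_nonneg (ih i l) (hM l j)

theorem pow_pos_mono {M N : Matrix X X ℝ} (hM : ∀ i j, 0 ≤ M i j) (hN : ∀ i j, 0 ≤ N i j)
    (h : ∀ i j, 0 < M i j → 0 < N i j) :
    ∀ (n : ℕ) (i j : X), 0 < (M ^ n) i j → 0 < (N ^ n) i j := by
  intro n
  induction n with
  | zero => intro i j; rw [pow_zero, pow_zero]; exact id
  | succ n ih =>
      intro i j hpos
      rw [pow_succ, Matrix.mul_apply] at hpos
      obtain ⟨l, -, hl⟩ : ∃ l ∈ Finset.univ, 0 < (M ^ n) i l * M l j := by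
        by_contra hcon
        push_neg at hcon
        have : ∑ l, (M ^ n) i l * M l j ≤ 0 :=
          Finset.sum_nonpos fun l hl => hcon l hl
        linarith
      have h1 : 0 < (M ^ n) i l := by
        rcases lt_or_eq_of_le (pow_entry_nonneg hM n i l) with h' | h'
        · exact h'
        · exfalso; rw [← h'] at hl; simpa using hl
      have h2 : 0 < M l j := by
        rcases lt_or_eq_of_le (hM l j) with h' | h'
        · exact h'
        · exfalso; rw [← h'] at hl; simpa using hl
      rw [pow_succ, Matrix.mul_apply]
      have hterm : 0 < (N ^ n) i l * N l j := mul_pos (ih i l h1) (h l j h2)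
      have : (N ^ n) i l * N l j ≤ ∑ l', (N ^ n) i l' * N l' j :=
        Finset.single_le_sum (fun l' _ => mul_nonneg (pow_entry_nonneg hN n i l') (hN l' j))
          (Finset.mem_univ l)
      linarith



theorem perron_core {X : Type*} [Fintype X] [DecidableEq X] [Nonempty X]
    (P : Matrix X X ℝ) (hP : ∀ i j, 0 < P i j) :
    ∃ (r : ℝ) (v : X → ℝ), 0 < r ∧ (∀ i, 0 < v i) ∧ P.mulVec v = r • v ∧
      (∀ (s : ℝ) (z : X → ℝ), (∀ i, 0 ≤ z i) → z ≠ 0 →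
        (∀ i, s * z i ≤ P.mulVec z i) → s ≤ r) ∧
      (∀ w : X → ℝ, P.mulVec w = r • w → ∃ t : ℝ, w = t • v) := by
  classical
  have hmv : ∀ (z : X → ℝ) (i : X), P.mulVec z i = ∑ j, P i j * z j := by
    intro z i; rfl
  set B : ℝ := ∑ i, ∑ j, P i j with hB
  have hB0 : 0 ≤ B := Finset.sum_nonneg fun i _ => Finset.sum_nonneg fun j _ => (hP i j).le
  set K : Set (ℝ × (X → ℝ)) :=
    {p | p.1 ∈ Set.Icc 0 B ∧ (∀ i, p.2 i ∈ Set.Icc (0:ℝ) 1) ∧ (∑ i, p.2 i) = 1 ∧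
      ∀ i, p.1 * p.2 i ≤ P.mulVec p.2 i} with hKdef
  -- continuity of mulVec entries in the vector argument
  have hcont : ∀ i : X, Continuous fun p : ℝ × (X → ℝ) => P.mulVec p.2 i := by
    intro i
    have : (fun p : ℝ × (X → ℝ) => P.mulVec p.2 i)
        = fun p : ℝ × (X → ℝ) => ∑ j, P i j * p.2 j := by
      funext p; exact hmv p.2 i
    rw [this]
    exact continuous_finset_sum _ fun j _ =>
      continuous_const.mul ((continuous_apply j).comp continuous_snd)
  have hKclosed : IsClosed K := by
    have h1 : IsClosed {p : ℝ × (X → ℝ) | p.1 ∈ Set.Icc 0 B} :=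
      isClosed_Icc.preimage continuous_fst
    have h2 : IsClosed {p : ℝ × (X → ℝ) | ∀ i, p.2 i ∈ Set.Icc (0:ℝ) 1} := by
      rw [Set.setOf_forall]
      exact isClosed_iInter fun i =>
        isClosed_Icc.preimage ((continuous_apply i).comp continuous_snd)
    have h3 : IsClosed {p : ℝ × (X → ℝ) | (∑ i, p.2 i) = 1} :=
      isClosed_eq (continuous_finset_sum _ fun i _ => (continuous_apply i).comp continuous_snd)
        continuous_const
    have h4 : IsClosed {p : ℝ × (X → ℝ) | ∀ i, p.1 * p.2 i ≤ P.mulVec p.2 i} := by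
      rw [Set.setOf_forall]
      exact isClosed_iInter fun i =>
        isClosed_le (continuous_fst.mul ((continuous_apply i).comp continuous_snd)) (hcont i)
    exact (h1.inter (h2.inter (h3.inter h4)))
  have hKcompact : IsCompact K := by
    refine IsCompact.of_isClosed_subset
      ((isCompact_Icc (a := (0:ℝ)) (b := B)).prod
        (isCompact_univ_pi fun _ : X => isCompact_Icc (a := (0:ℝ)) (b := 1))) hKclosed ?_
    rintro ⟨s, z⟩ hp
    exact ⟨hp.1, fun i _ => hp.2.1 i⟩
  have hKne : K.Nonempty := by
    refine ⟨(0, fun _ => (Fintype.card X : ℝ)⁻¹), ?_, ?_, ?_, ?_⟩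
    · exact ⟨le_refl 0, hB0⟩
    · intro i
      constructor
      · exact inv_nonneg.2 (Nat.cast_nonneg _)
      · rw [inv_le_one_iff₀]
        right
        exact_mod_cast Fintype.card_pos
    · rw [Finset.sum_const, Finset.card_univ, nsmul_eq_mul]
      have : (Fintype.card X : ℝ) ≠ 0 := by exact_mod_cast Fintype.card_ne_zero
      field_simp
    · intro i
      rw [zero_mul, hmv]
      exact Finset.sum_nonneg fun j _ =>
        mul_nonneg (hP i j).le (inv_nonneg.2 (Nat.cast_nonneg _))
  obtain ⟨p, hpK, hpmax⟩ := hKcompact.exists_isMaxOn hKne continuous_fst.continuousOn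
  obtain ⟨hrIcc, hv01, hvsum, hineq⟩ := hpK
  set r : ℝ := p.1 with hrdef
  set v : X → ℝ := p.2 with hvdef
  have hv0 : ∀ i, 0 ≤ v i := fun i => (hv01 i).1
  have hv1 : ∀ i, v i ≤ 1 := fun i => (hv01 i).2
  -- some positive coordinate
  obtain ⟨j₀, hj₀⟩ : ∃ j, 0 < v j := by
    by_contra hcon
    push_neg at hcon
    have : ∀ j, v j = 0 := fun j => le_antisymm (hcon j) (hv0 j)
    rw [Finset.sum_congr rfl fun j _ => this j] at hvsum
    simp at hvsum
  -- positivity of P z when z ≥ 0 and z j₁ > 0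
  have hPzpos : ∀ (z : X → ℝ), (∀ i, 0 ≤ z i) → ∀ (j₁ : X), 0 < z j₁ →
      ∀ i, 0 < P.mulVec z i := by
    intro z hz j₁ hj₁ i
    rw [hmv]
    have hterm : 0 < P i j₁ * z j₁ := mul_pos (hP i j₁) hj₁
    have : P i j₁ * z j₁ ≤ ∑ j, P i j * z j :=
      Finset.single_le_sum (fun j _ => mul_nonneg (hP i j).le (hz j)) (Finset.mem_univ j₁)
    linarith
  have hPv_pos : ∀ i, 0 < P.mulVec v i := hPzpos v hv0 j₀ hj₀
  -- the fixed point property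
  have hfix : ∀ i, P.mulVec v i = r * v i := by
    by_contra hcon
    push_neg at hcon
    obtain ⟨i₀, hi₀⟩ := hcon
    have hi₀' : r * v i₀ < P.mulVec v i₀ := lt_of_le_of_ne (hineq i₀) (Ne.symm hi₀)
    set z : X → ℝ := fun i => P.mulVec v i - r * v i with hzdef
    have hz0 : ∀ i, 0 ≤ z i := fun i => sub_nonneg.2 (hineq i)
    have hzi₀ : 0 < z i₀ := sub_pos.2 hi₀'
    set w : X → ℝ := fun i => P.mulVec v i with hwdef
    have hw : ∀ i, 0 < w i := hPv_pos
    have hPz : ∀ i, 0 < P.mulVec z i := hPzpos z hz0 i₀ hzi₀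
    -- P w i = r * w i + P z i
    have hPw : ∀ i, P.mulVec w i = r * w i + P.mulVec z i := by
      intro i
      have hzw : z = w - r • v := by funext k; simp [hzdef, hwdef, Pi.smul_apply, smul_eq_mul]
      have h5 : P.mulVec z = P.mulVec w - r • P.mulVec v := by
        rw [hzw, Matrix.mulVec_sub, Matrix.mulVec_smul]
      have h6 : P.mulVec v i = w i := rfl
      rw [h5, Pi.sub_apply, Pi.smul_apply, smul_eq_mul, h6]
      ring
    set ε : ℝ := Finset.univ.inf' Finset.univ_nonempty (fun i => P.mulVec z i / w i) with hεdef
    have hε : 0 < ε := by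
      rw [hεdef, Finset.lt_inf'_iff]
      exact fun i _ => div_pos (hPz i) (hw i)
    have hkey : ∀ i, (r + ε) * w i ≤ P.mulVec w i := by
      intro i
      have h1 : ε ≤ P.mulVec z i / w i := Finset.inf'_le _ (Finset.mem_univ i)
      have h2 : ε * w i ≤ P.mulVec z i := by
        rw [← le_div_iff₀ (hw i)]; exact h1
      rw [hPw i]; nlinarith
    set σ : ℝ := ∑ i, w i with hσdef
    have hσ : 0 < σ := Finset.sum_pos (fun i _ => hw i) Finset.univ_nonempty
    set y : X → ℝ := fun i => σ⁻¹ * w i with hydef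
    have hy0 : ∀ i, 0 ≤ y i := fun i => by
      simp only [hydef]
      exact (mul_pos (inv_pos.2 hσ) (hw i)).le
    have hysum : ∑ i, y i = 1 := by
      rw [hydef, ← Finset.mul_sum, ← hσdef, inv_mul_cancel₀ (ne_of_gt hσ)]
    have hy1 : ∀ i, y i ≤ 1 := by
      intro i
      have : y i ≤ ∑ j, y j := Finset.single_le_sum (fun j _ => hy0 j) (Finset.mem_univ i)
      rw [hysum] at this; exact this
    have hyvec : y = σ⁻¹ • w := by funext k; simp [hydef, Pi.smul_apply, smul_eq_mul]
    have hPy : ∀ i, P.mulVec y i = σ⁻¹ * P.mulVec w i := by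
      intro i; rw [hyvec, Matrix.mulVec_smul]; simp [Pi.smul_apply, smul_eq_mul]
    have hykey : ∀ i, (r + ε) * y i ≤ P.mulVec y i := by
      intro i
      rw [hPy i, hydef]
      have := hkey i
      have hσi : 0 ≤ σ⁻¹ := by positivity
      calc (r + ε) * (σ⁻¹ * w i) = σ⁻¹ * ((r + ε) * w i) := by ring
        _ ≤ σ⁻¹ * P.mulVec w i := mul_le_mul_of_nonneg_left (hkey i) hσi
    have hrε_le_B : r + ε ≤ B := by
      have h1 : ∀ i, P.mulVec y i ≤ ∑ j, P i j := by
        intro i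
        rw [hmv]
        refine Finset.sum_le_sum fun j _ => ?_
        have := hy1 j
        nlinarith [hP i j, hy0 j]
      have h2 : (r + ε) = ∑ i, (r + ε) * y i := by
        rw [← Finset.mul_sum, hysum, mul_one]
      rw [h2, hB]
      exact Finset.sum_le_sum fun i _ => le_trans (hykey i) (h1 i)
    have hmem : ((r + ε, y) : ℝ × (X → ℝ)) ∈ K := by
      refine ⟨⟨?_, hrε_le_B⟩, fun i => ⟨hy0 i, hy1 i⟩, hysum, hykey⟩
      have h7 : 0 ≤ r := hrIcc.1
      show 0 ≤ r + ε
      linarith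
    have := hpmax hmem
    simp only [hrdef] at this
    have : r + ε ≤ r := this
    linarith
  have hfix' : P.mulVec v = r • v := by
    funext i; rw [Pi.smul_apply, smul_eq_mul]; exact hfix i
  -- r > 0
  have hr : 0 < r := by
    have h1 := hPv_pos j₀
    rw [hfix j₀] at h1
    by_contra hcon
    push_neg at hcon
    nlinarith
  -- v > 0
  have hvpos : ∀ i, 0 < v i := by
    intro i
    have h1 := hPv_pos i
    rw [hfix i] at h1
    nlinarith
  refine ⟨r, v, hr, hvpos, hfix', ?_, ?_⟩
  · -- domination
    intro s z hz hzne hsz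
    obtain ⟨j₁, hj₁⟩ : ∃ j, 0 < z j := by
      by_contra hcon
      push_neg at hcon
      exact hzne (funext fun j => le_antisymm (hcon j) (hz j))
    obtain ⟨i₀, -, hi₀⟩ := Finset.exists_mem_eq_sup' (Finset.univ_nonempty)
      (fun i => z i / v i)
    set t : ℝ := Finset.univ.sup' Finset.univ_nonempty (fun i => z i / v i) with htdef
    have ht : 0 < t := by
      have h1 : z j₁ / v j₁ ≤ t := Finset.le_sup' (fun i => z i / v i) (Finset.mem_univ j₁)
      have h2 : 0 < z j₁ / v j₁ := div_pos hj₁ (hvpos j₁)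
      linarith
    have hzt : ∀ i, z i ≤ t * v i := by
      intro i
      have h1 : z i / v i ≤ t := Finset.le_sup' (fun i => z i / v i) (Finset.mem_univ i)
      rw [div_le_iff₀ (hvpos i)] at h1
      linarith [h1]
    have hzi₀ : z i₀ = t * v i₀ := by
      have h1 : z i₀ / v i₀ = t := hi₀.symm
      rw [div_eq_iff (ne_of_gt (hvpos i₀))] at h1
      linarith [h1]
    have hchain : s * z i₀ ≤ r * z i₀ := by
      calc s * z i₀ ≤ P.mulVec z i₀ := hsz i₀
        _ ≤ ∑ j, P i₀ j * (t * v j) := by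
            rw [hmv]
            exact Finset.sum_le_sum fun j _ => mul_le_mul_of_nonneg_left (hzt j) (hP i₀ j).le
        _ = t * P.mulVec v i₀ := by
            rw [hmv, Finset.mul_sum]
            exact Finset.sum_congr rfl fun j _ => by ring
        _ = t * (r * v i₀) := by rw [hfix i₀]
        _ = r * z i₀ := by rw [hzi₀]; ring
    have hzi₀pos : 0 < z i₀ := by rw [hzi₀]; exact mul_pos ht (hvpos i₀)
    exact le_of_mul_le_mul_right hchain hzi₀pos
  · -- simplicity
    intro w hw
    obtain ⟨i₀, -, hi₀⟩ := Finset.exists_mem_eq_inf' (Finset.univ_nonempty)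
      (fun i => w i / v i)
    set t : ℝ := Finset.univ.inf' Finset.univ_nonempty (fun i => w i / v i) with htdef
    refine ⟨t, ?_⟩
    set z : X → ℝ := fun i => w i - t * v i with hzdef
    have hz0 : ∀ i, 0 ≤ z i := by
      intro i
      have h1 : t ≤ w i / v i := Finset.inf'_le (fun i => w i / v i) (Finset.mem_univ i)
      rw [le_div_iff₀ (hvpos i)] at h1
      simp [hzdef]; linarith
    have hzi₀ : z i₀ = 0 := by
      have h1 : w i₀ / v i₀ = t := hi₀.symm
      rw [div_eq_iff (ne_of_gt (hvpos i₀))] at h1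
      simp [hzdef]; linarith [h1]
    have hPz : P.mulVec z = r • z := by
      have hzvec : z = w - t • v := by funext k; simp [hzdef, Pi.smul_apply, smul_eq_mul]
      rw [hzvec, Matrix.mulVec_sub, Matrix.mulVec_smul, hw, hfix']
      funext k
      simp [Pi.sub_apply, Pi.smul_apply, smul_eq_mul]
      ring
    by_cases hztriv : z = 0
    · funext k
      have := congrFun hztriv k
      simp [hzdef] at this
      rw [Pi.smul_apply, smul_eq_mul]
      linarith [this]
    · exfalso
      obtain ⟨j₁, hj₁⟩ : ∃ j, 0 < z j := by
        by_contra hcon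
        push_neg at hcon
        exact hztriv (funext fun j => le_antisymm (hcon j) (hz0 j))
      have h1 := hPzpos z hz0 j₁ hj₁ i₀
      have h2 : P.mulVec z i₀ = r * z i₀ := by rw [hPz, Pi.smul_apply, smul_eq_mul]
      rw [h2, hzi₀] at h1
      simp at h1


theorem exp_entry_pos_transfer (M N : Matrix X X ℝ)
    (hM : ∀ i j, 0 ≤ M i j) (hN : ∀ i j, 0 ≤ N i j)
    (h : ∀ i j, 0 < M i j → 0 < N i j) (i j : X)
    (hexp : 0 < NormedSpace.exp M i j) : 0 < NormedSpace.exp N i j := by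
  have hsM := hasSum_exp_entry M i j
  have hsN := hasSum_exp_entry N i j
  obtain ⟨n, hn⟩ : ∃ n : ℕ, 0 < (M ^ n) i j := by
    by_contra hcon
    push_neg at hcon
    have hz : ∀ n : ℕ, (n ! : ℝ)⁻¹ * (M ^ n) i j = 0 := by
      intro n
      have h0 := le_antisymm (hcon n) (pow_entry_nonneg hM n i j)
      rw [h0, mul_zero]
    have : NormedSpace.exp M i j = 0 := by
      refine hsM.unique ?_
      simpa [hz] using (hasSum_zero : HasSum (fun _ : ℕ => (0:ℝ)) 0)
    rw [this] at hexp
    exact lt_irrefl _ hexp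
  have hNn : 0 < (N ^ n) i j := pow_pos_mono hM hN h n i j hn
  have hterm : 0 < (n ! : ℝ)⁻¹ * (N ^ n) i j := by positivity
  have hle : (n ! : ℝ)⁻¹ * (N ^ n) i j ≤ NormedSpace.exp N i j :=
    le_hasSum hsN n fun m _ =>
      mul_nonneg (by positivity) (pow_entry_nonneg hN m i j)
  linarith

end PFstmt1

open PFstmt1 in
/-- Perron–Frobenius for `D + I_u` where `D` is an irreducible generator matrix:
there is a real eigenvalue `Λ` with strictly positive eigenvector, dominating the
real part of every complex eigenvalue. -/
theorem stmt_1 {X : Type*} [Fintype X] [DecidableEq X]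
    (D : Matrix X X ℝ)
    (hoff : ∀ i j, i ≠ j → 0 ≤ D i j) (hrow : ∀ i, ∑ j, D i j = 0)
    (hirr : ∀ i j, 0 < NormedSpace.exp D i j)
    (u : X → ℝ) :
    ∃ (Λ : ℝ) (v : X → ℝ), (∀ i, 0 < v i) ∧
      (D + Matrix.diagonal u).mulVec v = Λ • v ∧
      ∀ (lam : ℂ) (w : X → ℂ), w ≠ 0 →
        ((D + Matrix.diagonal u).map (Complex.ofReal)).mulVec w = lam • w →
        lam.re ≤ Λ := by
  classical
  cases isEmpty_or_nonempty X with
  | inl hempty =>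
      refine ⟨0, fun _ => 1, fun i => hempty.elim i, funext fun i => hempty.elim i, ?_⟩
      intro lam w hw _
      exact absurd (funext fun i => hempty.elim i) hw
  | inr hne =>
  set A : Matrix X X ℝ := D + Matrix.diagonal u with hAdef
  set c : ℝ := 1 + ∑ k, |D k k| with hcdef
  set c' : ℝ := 1 + ∑ k, |A k k| with hc'def
  set M : Matrix X X ℝ := D + c • 1 with hMdef
  set N : Matrix X X ℝ := A + c' • 1 with hNdef
  have habs : ∀ (f : X → ℝ) (k : X), |f k| ≤ ∑ l, |f l| := fun f k =>
    Finset.single_le_sum (f := fun l => |f l|) (fun l _ => abs_nonneg _) (Finset.mem_univ k)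
  have hMd : ∀ i, 0 < M i i := by
    intro i
    have h1 := habs (fun k => D k k) i
    have h2 := neg_abs_le (D i i)
    simp only [hMdef, Matrix.add_apply, Matrix.smul_apply, Matrix.one_apply_eq, smul_eq_mul,
      mul_one]
    beta_reduce at h1
    linarith [hcdef.ge]
  have hMoff : ∀ i j, i ≠ j → M i j = D i j := by
    intro i j hij
    simp [hMdef, Matrix.add_apply, Matrix.smul_apply, Matrix.one_apply_ne hij]
  have hM0 : ∀ i j, 0 ≤ M i j := by
    intro i j
    by_cases h : i = j
    · subst h; exact (hMd i).le
    · rw [hMoff i j h]; exact hoff i j h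
  have hAoff : ∀ i j, i ≠ j → A i j = D i j := by
    intro i j hij
    simp [hAdef, Matrix.add_apply, Matrix.diagonal_apply_ne _ hij]
  have hNd : ∀ i, 0 < N i i := by
    intro i
    have h1 := habs (fun k => A k k) i
    have h2 := neg_abs_le (A i i)
    simp only [hNdef, Matrix.add_apply, Matrix.smul_apply, Matrix.one_apply_eq, smul_eq_mul,
      mul_one]
    beta_reduce at h1
    linarith [hc'def.ge]
  have hNoff : ∀ i j, i ≠ j → N i j = D i j := by
    intro i j hij
    rw [hNdef]
    simp [Matrix.add_apply, Matrix.smul_apply, Matrix.one_apply_ne hij, hAoff i j hij]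
  have hN0 : ∀ i j, 0 ≤ N i j := by
    intro i j
    by_cases h : i = j
    · subst h; exact (hNd i).le
    · rw [hNoff i j h]; exact hoff i j h
  have hsupp : ∀ i j, 0 < M i j → 0 < N i j := by
    intro i j hMij
    by_cases h : i = j
    · subst h; exact hNd i
    · rw [hNoff i j h]; rwa [hMoff i j h] at hMij
  have hexpM : ∀ i j, 0 < NormedSpace.exp M i j := by
    have hshift : NormedSpace.exp M = Real.exp c • NormedSpace.exp D := by
      rw [hMdef]; exact exp_add_smul_one D c
    intro i j
    rw [hshift, Matrix.smul_apply, smul_eq_mul]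
    exact mul_pos (Real.exp_pos c) (hirr i j)
  have hexpN : ∀ i j, 0 < NormedSpace.exp N i j := fun i j =>
    exp_entry_pos_transfer M N hM0 hN0 hsupp i j (hexpM i j)
  have hexpA : ∀ i j, 0 < NormedSpace.exp A i j := by
    have hshift : NormedSpace.exp N = Real.exp c' • NormedSpace.exp A := by
      rw [hNdef]; exact exp_add_smul_one A c'
    intro i j
    have h1 := hexpN i j
    rw [hshift, Matrix.smul_apply, smul_eq_mul] at h1
    nlinarith [Real.exp_pos c']
  set P : Matrix X X ℝ := NormedSpace.exp A with hPdef
  obtain ⟨r, v, hr, hv, hPv, hdom, hsimp⟩ := perron_core P hexpA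
  have hcomm : Commute A P := (Commute.refl A).exp_right
  have hPAv : P.mulVec (A.mulVec v) = r • A.mulVec v := by
    calc P.mulVec (A.mulVec v) = (P * A).mulVec v := Matrix.mulVec_mulVec v P A
      _ = (A * P).mulVec v := by rw [← hcomm.eq]
      _ = A.mulVec (P.mulVec v) := (Matrix.mulVec_mulVec v A P).symm
      _ = A.mulVec (r • v) := by rw [hPv]
      _ = r • A.mulVec v := Matrix.mulVec_smul A r v
  obtain ⟨Λ, hΛ⟩ := hsimp (A.mulVec v) hPAv
  refine ⟨Λ, v, hv, hΛ, ?_⟩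
  intro lam w hw hlam
  have hexp_c : (NormedSpace.exp (A.map Complex.ofReal)).mulVec w
      = NormedSpace.exp lam • w :=
    exp_mulVec_eigen (A.map Complex.ofReal) w lam (hasSum_exp_mulVec _ w) hlam
  rw [exp_map_ofReal A, ← Complex.exp_eq_exp_ℂ] at hexp_c
  have hrΛ : r = Real.exp Λ := by
    have h2 : P.mulVec v = Real.exp Λ • v := by
      have h3 := exp_mulVec_eigen (𝕂 := ℝ) A v Λ (hasSum_exp_mulVec A v) hΛ
      rwa [← Real.exp_eq_exp_ℝ] at h3
    have x0 : X := Classical.arbitrary X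
    have h4 := congrFun hPv x0
    have h5 := congrFun h2 x0
    rw [Pi.smul_apply, smul_eq_mul] at h4 h5
    have h6 := hv x0
    have h7 : r * v x0 = Real.exp Λ * v x0 := h4.symm.trans h5
    exact mul_right_cancel₀ (ne_of_gt h6) h7
  set a : X → ℝ := fun i => ‖w i‖ with hadef
  have ha0 : ∀ i, 0 ≤ a i := fun i => norm_nonneg _
  have hane : a ≠ 0 := by
    intro hcon
    apply hw
    funext i
    have h8 := congrFun hcon i
    simp only [hadef, Pi.zero_apply] at h8
    exact norm_eq_zero.mp h8
  have hkey : ∀ i, Real.exp lam.re * a i ≤ P.mulVec a i := by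
    intro i
    have h4 : (P.map Complex.ofReal).mulVec w i = Complex.exp lam * w i := by
      have h9 := congrFun hexp_c i
      rwa [Pi.smul_apply, smul_eq_mul] at h9
    have h5 : (P.map Complex.ofReal).mulVec w i = ∑ j, (P i j : ℂ) * w j := by
      simp [Matrix.mulVec, dotProduct, Matrix.map_apply]
    calc Real.exp lam.re * a i = ‖Complex.exp lam * w i‖ := by
          rw [norm_mul, Complex.norm_exp, hadef]
      _ = ‖∑ j, (P i j : ℂ) * w j‖ := by rw [← h4, h5]
      _ ≤ ∑ j, ‖(P i j : ℂ) * w j‖ := norm_sum_le _ _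
      _ = ∑ j, P i j * a j := Finset.sum_congr rfl fun j _ => by
          rw [norm_mul, Complex.norm_real, Real.norm_eq_abs, abs_of_pos (hexpA i j), hadef]
      _ = P.mulVec a i := rfl
  have hfin := hdom (Real.exp lam.re) a ha0 hane hkey
  rw [hrΛ] at hfin
  exact Real.exp_le_exp.mp hfin
end

section
/- Let D be a generator matrix on a finite set X, u : X → ℝ, Λ ∈ ℝ, and v : X → (0,∞) a strictly positive vector satisfying the eigenvector equation (D + I_u) v = Λ v. Define the matrix Ď by Ď(i,j) = (v(j)/v(i)) · [ D(i,j) + (u(i) − Λ)·𝟙{i = j} ]. Then Ď is a generator matrix: Ď(i,j) ≥ 0 for all i ≠ j and Σ_j Ď(i,j) = 0 for every i. -/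
/-- The twisted matrix `Ď(i,j) = (v(j)/v(i))·[D(i,j) + (u(i) − Λ)·𝟙{i=j}]` built from a
positive eigenvector `(D + I_u)v = Λv` is again a generator matrix. -/
theorem stmt_2 {X : Type*} [Fintype X] [DecidableEq X]
    (D : Matrix X X ℝ)
    (hoff : ∀ i j, i ≠ j → 0 ≤ D i j) (hrow : ∀ i, ∑ j, D i j = 0)
    (u : X → ℝ) (Λ : ℝ) (v : X → ℝ) (hv : ∀ i, 0 < v i)
    (heig : (D + Matrix.diagonal u).mulVec v = Λ • v)
    (Dcheck : Matrix X X ℝ)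
    (hDcheck : ∀ i j, Dcheck i j = (v j / v i) * (D i j + (u i - Λ) * (if i = j then 1 else 0))) :
    (∀ i j, i ≠ j → 0 ≤ Dcheck i j) ∧ (∀ i, ∑ j, Dcheck i j = 0) := by
  constructor
  · intro i j hij
    rw [hDcheck, if_neg hij, mul_zero, add_zero]
    exact mul_nonneg (div_nonneg (hv j).le (hv i).le) (hoff i j hij)
  · intro i
    have hrow' : ∑ j, D i j * v j + u i * v i = Λ * v i := by
      have h := congrFun heig i
      simp only [Matrix.mulVec, dotProduct, Matrix.add_apply, add_mul,
        Finset.sum_add_distrib, Matrix.diagonal_apply, ite_mul, zero_mul,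
        Finset.sum_ite_eq, Finset.mem_univ, if_true, Pi.smul_apply, smul_eq_mul] at h
      exact h
    have hvi := (hv i).ne'
    have h1 : ∀ j, Dcheck i j =
        (D i j * v j + (if i = j then (u i - Λ) * v i else 0)) / v i := by
      intro j; rw [hDcheck]
      by_cases h : i = j
      · subst h; field_simp; simp only [if_true]; ring
      · simp only [if_neg h, mul_zero, add_zero]; field_simp
    simp only [h1, ← Finset.sum_div, Finset.sum_add_distrib, Finset.sum_ite_eq,
      Finset.mem_univ, if_true]
    rw [div_eq_zero_iff]; left; linarith
end

section
/- Let D be a generator matrix on a finite set X satisfying detailed balance with respect to a strictly positive probability vector π, let u : X → ℝ, ζ ∈ ℝ, Λ_ζ ∈ ℝ, and v_ζ : X → (0,∞) satisfy (D + ζ I_u) v_ζ = Λ_ζ v_ζ. Define D_ζ(i,j) = (v_ζ(j)/v_ζ(i)) · [ D(i,j) + (ζ u(i) − Λ_ζ)·𝟙{i = j} ] and π_ζ(i) = π(i) v_ζ(i)² / Z with Z = Σ_j π(j) v_ζ(j)². Then π_ζ is a probability vector and D_ζ satisfies detailed balance with respect to π_ζ: π_ζ(i) D_ζ(i,j) =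 π_ζ(j) D_ζ(j,i) for all i, j; in particular π_ζ is invariant for D_ζ. -/
/-- If the generator `D` is reversible w.r.t. a positive probability vector `π`, then each
twisted generator `D_ζ` is reversible w.r.t. `π_ζ(i) = π(i)v_ζ(i)²/Z`; in particular `π_ζ`
is an invariant probability vector for `D_ζ`. -/
theorem stmt_3 {X : Type*} [Fintype X] [DecidableEq X]
    (D : Matrix X X ℝ)
    (hoff : ∀ i j, i ≠ j → 0 ≤ D i j) (hrow : ∀ i, ∑ j, D i j = 0)
    (π : X → ℝ) (hπpos : ∀ i, 0 < π i) (hπsum : ∑ i, π i = 1)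
    (hrev : ∀ i j, π i * D i j = π j * D j i)
    (u : X → ℝ) (ζ : ℝ) (Λζ : ℝ) (vζ : X → ℝ) (hvζ : ∀ i, 0 < vζ i)
    (heig : (D + ζ • Matrix.diagonal u).mulVec vζ = Λζ • vζ)
    (Dζ : Matrix X X ℝ)
    (hDζ : ∀ i j, Dζ i j = (vζ j / vζ i) * (D i j + (ζ * u i - Λζ) * (if i = j then 1 else 0)))
    (Z : ℝ) (hZ : Z = ∑ j, π j * (vζ j) ^ 2)
    (πζ : X → ℝ) (hπζ : ∀ i, πζ i = π i * (vζ i) ^ 2 / Z) :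
    (∀ i, 0 < πζ i) ∧ (∑ i, πζ i = 1) ∧
    (∀ i j, πζ i * Dζ i j = πζ j * Dζ j i) ∧
    (∀ j, ∑ i, πζ i * Dζ i j = 0) := by
  have hne : (Finset.univ : Finset X).Nonempty := by
    by_contra h
    rw [Finset.not_nonempty_iff_eq_empty] at h
    rw [h] at hπsum
    simp at hπsum
  have hZpos : 0 < Z := by
    rw [hZ]
    exact Finset.sum_pos (fun j _ => mul_pos (hπpos j) (pow_pos (hvζ j) 2)) hne
  have hpos : ∀ i, 0 < πζ i := fun i => by rw [hπζ]; exact div_pos (mul_pos (hπpos i) (pow_pos (hvζ i) 2)) hZpos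
  have hsum : ∑ i, πζ i = 1 := by
    simp only [hπζ, div_eq_mul_inv, ← Finset.sum_mul, ← hZ]
    field_simp
  have hrevζ : ∀ i j, πζ i * Dζ i j = πζ j * Dζ j i := by
    intro i j
    by_cases h : i = j
    · subst h; rfl
    · rw [hπζ i, hπζ j, hDζ i j, hDζ j i, if_neg h, if_neg (Ne.symm h),
        mul_zero, add_zero, mul_zero, add_zero]
      have hvi := (hvζ i).ne'
      have hvj := (hvζ j).ne'
      have hZ' := hZpos.ne'
      field_simp
      linear_combination hrev i j
  have hrowζ : ∀ i, ∑ j, Dζ i j = 0 := by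
    intro i
    have he := congrFun heig i
    simp [Matrix.mulVec, Matrix.add_mulVec, dotProduct, Matrix.diagonal,
      Matrix.smul_mulVec] at he
    have hvi := (hvζ i).ne'
    have h1 : ∀ j, Dζ i j =
        ((D i j + if i = j then ζ * u i else 0) * vζ j
          - Λζ * (if i = j then vζ i else 0)) / vζ i := by
      intro j
      rw [hDζ]
      by_cases hij : i = j
      · subst hij; simp; field_simp; ring
      · simp [hij]; field_simp
    simp only [h1, ← Finset.sum_div]
    rw [div_eq_zero_iff]; left
    rw [Finset.sum_sub_distrib, he]
    simp
  refine ⟨hpos, hsum, hrevζ, fun j => ?_⟩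
  calc ∑ i, πζ i * Dζ i j = ∑ i, πζ j * Dζ j i :=
        Finset.sum_congr rfl fun i _ => hrevζ i j
    _ = πζ j * ∑ i, Dζ j i := by rw [Finset.mul_sum]
    _ = 0 := by rw [hrowζ j, mul_zero]
end

section
/- Let D be a generator matrix on a finite set X such that every entry of exp(D) is strictly positive. Then, regarding D as a complex matrix, the kernel of D is one-dimensional and spanned by the all-ones vector, and every nonzero complex eigenvalue λ of D satisfies Re(λ) < 0. -/
open scoped Matrix
open NormedSpace

/-- If the modulus of a complex number equals its real part, the number is real. -/
private lemma aux_abs_eq_re {z : ℂ} (h : ‖z‖ = z.re) : z = (z.re : ℂ) := by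
  have h1 : z.re ^ 2 + z.im ^ 2 = z.re ^ 2 := by
    have h2 := Complex.sq_norm z
    rw [h, Complex.normSq_apply] at h2
    nlinarith [h2]
  have him : z.im = 0 := by nlinarith [sq_nonneg z.im]
  exact Complex.ext (by simp) (by simp [him])

/-- Action of the (real-scalar) matrix exponential on an eigenvector. -/
private lemma aux_exp_mulVec {X : Type*} [Fintype X] [DecidableEq X]
    (A : Matrix X X ℂ) (w : X → ℂ) (μ : ℂ) (h : A.mulVec w = μ • w) :
    (NormedSpace.exp A).mulVec w = Complex.exp μ • w := by
  letI : SeminormedRing (Matrix X X ℂ) := Matrix.linftyOpSemiNormedRing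
  letI : NormedRing (Matrix X X ℂ) := Matrix.linftyOpNormedRing
  letI : NormedAlgebra ℝ (Matrix X X ℂ) := Matrix.linftyOpNormedAlgebra
  have hpow : ∀ n : ℕ, (A ^ n).mulVec w = (μ ^ n) • w := by
    intro n
    induction n with
    | zero => simp [Matrix.one_mulVec]
    | succ n ih =>
      rw [pow_succ', ← Matrix.mulVec_mulVec, ih, Matrix.mulVec_smul, h, smul_smul,
        ← pow_succ]
  -- the linear map `M ↦ M.mulVec w`
  let L : Matrix X X ℂ →ₗ[ℂ] (X → ℂ) :=
    { toFun := fun M => M.mulVec w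
      map_add' := fun M N => Matrix.add_mulVec M N w
      map_smul' := fun c M => Matrix.smul_mulVec c M w }
  let Lc : Matrix X X ℂ →L[ℂ] (X → ℂ) := LinearMap.toContinuousLinearMap L
  have hsum : Summable fun n : ℕ => ((n.factorial : ℝ)⁻¹) • A ^ n :=
    NormedSpace.expSeries_summable' (𝕂 := ℝ) A
  have hLr : ∀ (r : ℝ) (M : Matrix X X ℂ), Lc (r • M) = r • Lc M := by
    intro r M
    have : (r • M : Matrix X X ℂ) = ((r : ℂ)) • M := by
      ext i j; simp [Matrix.smul_apply, Complex.real_smul]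
    rw [this, map_smul]
    ext i; simp [Complex.real_smul]
  have key : Lc (NormedSpace.exp A) = ∑' n : ℕ, ((n.factorial : ℝ)⁻¹) • ((μ ^ n) • w) := by
    rw [NormedSpace.exp_eq_tsum ℝ, Lc.map_tsum hsum]
    refine tsum_congr fun n => ?_
    rw [hLr]
    congr 1
    exact hpow n
  have key2 : (∑' n : ℕ, ((n.factorial : ℝ)⁻¹) • ((μ ^ n) • w))
      = (∑' n : ℕ, ((n.factorial : ℝ)⁻¹) • (μ ^ n)) • w := by
    rw [← (NormedSpace.expSeries_summable' (𝕂 := ℝ) μ).tsum_smul_const w]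
    exact tsum_congr fun n => (smul_assoc _ _ _).symm
  have key3 : (∑' n : ℕ, ((n.factorial : ℝ)⁻¹) • (μ ^ n)) = Complex.exp μ := by
    rw [show (∑' n : ℕ, ((n.factorial : ℝ))⁻¹ • (μ ^ n)) = NormedSpace.exp μ from
      (congrFun (NormedSpace.exp_eq_tsum (𝕂 := ℝ)) μ).symm]
    rw [Complex.exp_eq_exp_ℂ]
  have : Lc (NormedSpace.exp A) = (NormedSpace.exp A).mulVec w := rfl
  rw [← this, key, key2, key3]

/-- Perron-type argument: an eigenvector of a strictly positive stochastic matrix for an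
eigenvalue of modulus at least 1 is constant. -/
private lemma aux_perron {X : Type*} [Fintype X] [DecidableEq X]
    (p : X → X → ℝ) (hp : ∀ i j, 0 < p i j) (hrowp : ∀ i, ∑ j, p i j = 1)
    (μ : ℂ) (hμ : 1 ≤ ‖μ‖) (w : X → ℂ) (hw : w ≠ 0)
    (heig : ∀ i, ∑ j, (p i j : ℂ) * w j = μ * w i) :
    ∃ c : ℂ, w = Function.const X c := by
  obtain ⟨j₀, hj₀⟩ : ∃ j, w j ≠ 0 := Function.ne_iff.mp hw
  obtain ⟨i, -, hi⟩ := Finset.exists_max_image Finset.univ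
    (fun j => ‖w j‖) ⟨j₀, Finset.mem_univ j₀⟩
  set r : ℝ := ‖w i‖ with hr_def
  have hi' : ∀ j, ‖w j‖ ≤ r := fun j => hi j (Finset.mem_univ j)
  have hr : 0 < r := lt_of_lt_of_le (by simpa using hj₀) (hi' j₀)
  set S : ℂ := μ * w i with hS_def
  have hS1 : ‖S‖ ≤ ∑ j, p i j * ‖w j‖ := by
    rw [hS_def, ← heig i]
    refine le_trans (norm_sum_le _ _) (le_of_eq ?_)
    refine Finset.sum_congr rfl fun j _ => ?_
    rw [norm_mul, Complex.norm_real, Real.norm_eq_abs, abs_of_pos (hp i j)]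
  have hS2 : ∑ j, p i j * ‖w j‖ ≤ r := by
    calc ∑ j, p i j * ‖w j‖ ≤ ∑ j, p i j * r := by
          refine Finset.sum_le_sum fun j _ => ?_
          exact mul_le_mul_of_nonneg_left (hi' j) (hp i j).le
      _ = r := by rw [← Finset.sum_mul, hrowp i, one_mul]
  have hS3 : r ≤ ‖S‖ := by
    rw [hS_def, norm_mul]
    calc r = 1 * r := (one_mul r).symm
      _ ≤ ‖μ‖ * r := by gcongr
  have habsS : ‖S‖ = r := le_antisymm (hS1.trans hS2) hS3
  have hkey : ∑ j, p i j * ‖w j‖ = r :=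
    le_antisymm hS2 (hS3.trans hS1)
  -- all moduli are equal to r
  have hmod : ∀ j, ‖w j‖ = r := by
    have hzero : ∑ j, p i j * (r - ‖w j‖) = 0 := by
      simp only [mul_sub]
      rw [Finset.sum_sub_distrib, hkey, ← Finset.sum_mul, hrowp i, one_mul, sub_self]
    have := (Finset.sum_eq_zero_iff_of_nonneg (fun j _ =>
      mul_nonneg (hp i j).le (sub_nonneg.mpr (hi' j)))).mp hzero
    intro j
    have hj := this j (Finset.mem_univ j)
    have := mul_eq_zero.mp hj
    rcases this with h | h
    · exact absurd h (ne_of_gt (hp i j))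
    · linarith [sub_eq_zero.mp h]
  -- alignment: each `conj S * w j` equals `r ^ 2`
  have halign : ∀ j, (starRingEnd ℂ) S * w j = ((r ^ 2 : ℝ) : ℂ) := by
    have hsum : ∑ j, (p i j : ℂ) * ((starRingEnd ℂ) S * w j) = ((r ^ 2 : ℝ) : ℂ) := by
      have : ∑ j, (p i j : ℂ) * ((starRingEnd ℂ) S * w j)
          = (starRingEnd ℂ) S * ∑ j, (p i j : ℂ) * w j := by
        rw [Finset.mul_sum]; exact Finset.sum_congr rfl fun j _ => by ring
      rw [this, heig i, ← hS_def, Complex.conj_mul', habsS]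
      push_cast; ring
    have hre : ∑ j, p i j * ((starRingEnd ℂ) S * w j).re = r ^ 2 := by
      have h := congrArg Complex.re hsum
      rw [Complex.re_sum] at h
      simpa [Complex.re_ofReal_mul, ← Complex.ofReal_pow, Complex.ofReal_re] using h
    have hub : ∀ j, ((starRingEnd ℂ) S * w j).re ≤ r ^ 2 := by
      intro j
      calc ((starRingEnd ℂ) S * w j).re ≤ ‖(starRingEnd ℂ) S * w j‖ :=
            Complex.re_le_norm _
        _ = r ^ 2 := by rw [norm_mul, Complex.norm_conj, habsS, hmod j]; ring
    have hzero : ∑ j, p i j * (r ^ 2 - ((starRingEnd ℂ) S * w j).re) = 0 := by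
      simp only [mul_sub]
      rw [Finset.sum_sub_distrib, hre, ← Finset.sum_mul, hrowp i, one_mul, sub_self]
    have hall := (Finset.sum_eq_zero_iff_of_nonneg (fun j _ =>
      mul_nonneg (hp i j).le (sub_nonneg.mpr (hub j)))).mp hzero
    intro j
    have hj := hall j (Finset.mem_univ j)
    have hrej : ((starRingEnd ℂ) S * w j).re = r ^ 2 := by
      rcases mul_eq_zero.mp hj with h | h
      · exact absurd h (ne_of_gt (hp i j))
      · linarith [sub_eq_zero.mp h]
    have habsj : ‖(starRingEnd ℂ) S * w j‖ = ((starRingEnd ℂ) S * w j).re := by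
      rw [hrej, norm_mul, Complex.norm_conj, habsS, hmod j]; ring
    have := aux_abs_eq_re habsj
    rw [this, hrej]
  -- conclude w is constant
  have hSne : (starRingEnd ℂ) S ≠ 0 := by
    simp only [ne_eq, map_eq_zero]
    intro h
    rw [h, norm_zero] at habsS
    exact absurd habsS.symm (ne_of_gt hr)
  refine ⟨w j₀, funext fun j => ?_⟩
  have := (halign j).trans (halign j₀).symm
  exact mul_left_cancel₀ hSne this

/-- For an irreducible generator matrix `D` (all entries of `exp D` positive), the complex
kernel of `D` consists exactly of the constant vectors, and every nonzero complex eigenvalue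
has strictly negative real part. -/
theorem stmt_6 {X : Type*} [Fintype X] [DecidableEq X]
    (D : Matrix X X ℝ)
    (hoff : ∀ i j, i ≠ j → 0 ≤ D i j) (hrow : ∀ i, ∑ j, D i j = 0)
    (hirr : ∀ i j, 0 < NormedSpace.exp D i j) :
    (∀ w : X → ℂ, (D.map (Complex.ofReal)).mulVec w = 0 ↔ ∃ c : ℂ, w = Function.const X c) ∧
    (∀ (lam : ℂ) (w : X → ℂ), w ≠ 0 →
      (D.map (Complex.ofReal)).mulVec w = lam • w → lam ≠ 0 → lam.re < 0) := by
  set Dc : Matrix X X ℂ := D.map Complex.ofReal with hDc_def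
  -- constants are in the kernel
  have hconst : ∀ c : ℂ, Dc.mulVec (Function.const X c) = 0 := by
    intro c
    funext i
    have : ∑ j, ((D i j : ℂ)) * c = ((∑ j, D i j : ℝ) : ℂ) * c := by
      push_cast; rw [Finset.sum_mul]
    simp [Matrix.mulVec, dotProduct, hDc_def, Matrix.map_apply, this, hrow i]
  -- the exponential over ℂ agrees with the mapped real exponential
  have hmap : (NormedSpace.exp D).map Complex.ofReal = NormedSpace.exp Dc := by
    letI : SeminormedRing (Matrix X X ℝ) := Matrix.linftyOpSemiNormedRing
    letI : NormedRing (Matrix X X ℝ) := Matrix.linftyOpNormedRing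
    letI : NormedAlgebra ℝ (Matrix X X ℝ) := Matrix.linftyOpNormedAlgebra
    letI : SeminormedRing (Matrix X X ℂ) := Matrix.linftyOpSemiNormedRing
    letI : NormedRing (Matrix X X ℂ) := Matrix.linftyOpNormedRing
    letI : NormedAlgebra ℝ (Matrix X X ℂ) := Matrix.linftyOpNormedAlgebra
    letI : NormedAlgebra ℚ (Matrix X X ℝ) := .restrictScalars ℚ ℝ (Matrix X X ℝ)
    letI : NormedAlgebra ℚ (Matrix X X ℂ) := .restrictScalars ℚ ℝ (Matrix X X ℂ)
    have hcont : Continuous fun M : Matrix X X ℝ => M.map Complex.ofReal :=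
      Continuous.matrix_map continuous_id Complex.continuous_ofReal
    exact map_exp (Complex.ofRealHom.mapMatrix : Matrix X X ℝ →+* Matrix X X ℂ) hcont D
  set p : X → X → ℝ := fun i j => NormedSpace.exp D i j with hp_def
  have hE : ∀ i j, NormedSpace.exp Dc i j = ((p i j : ℝ) : ℂ) := by
    intro i j
    rw [← hmap]
    rfl
  -- row sums of exp are 1
  have hones : Dc.mulVec (fun _ => (1 : ℂ)) = (0 : ℂ) • (fun _ => (1 : ℂ)) := by
    rw [zero_smul]
    exact hconst 1
  have hrowE := aux_exp_mulVec Dc (fun _ => (1 : ℂ)) 0 hones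
  have hrowp : ∀ i, ∑ j, p i j = 1 := by
    intro i
    have h1 : ∑ j, ((p i j : ℝ) : ℂ) = 1 := by
      have := congrFun hrowE i
      simp only [Complex.exp_zero, one_smul] at this
      calc ∑ j, ((p i j : ℝ) : ℂ) = ∑ j, NormedSpace.exp Dc i j * 1 := by
            refine Finset.sum_congr rfl fun j _ => ?_
            rw [hE i j, mul_one]
        _ = 1 := this
    have : ((∑ j, p i j : ℝ) : ℂ) = ((1 : ℝ) : ℂ) := by push_cast at h1 ⊢; simpa using h1
    exact_mod_cast this
  -- main Perron-type consequence
  have main : ∀ (μ : ℂ) (w : X → ℂ), w ≠ 0 → 1 ≤ ‖Complex.exp μ‖ →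
      Dc.mulVec w = μ • w → ∃ c : ℂ, w = Function.const X c := by
    intro μ w hw hμ heq
    have hEw := aux_exp_mulVec Dc w μ heq
    refine aux_perron p (fun i j => hirr i j) hrowp (Complex.exp μ) hμ w hw ?_
    intro i
    have := congrFun hEw i
    calc ∑ j, ((p i j : ℝ) : ℂ) * w j = ∑ j, NormedSpace.exp Dc i j * w j := by
          refine Finset.sum_congr rfl fun j _ => ?_
          rw [hE i j]
      _ = ((NormedSpace.exp Dc).mulVec w) i := rfl
      _ = Complex.exp μ * w i := by rw [hEw]; rfl
  constructor
  · intro w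
    constructor
    · intro hker
      by_cases hw : w = 0
      · exact ⟨0, by funext j; simp [hw]⟩
      · refine main 0 w hw (by simp) ?_
        rw [zero_smul]; exact hker
    · rintro ⟨c, rfl⟩
      exact hconst c
  · intro lam w hw heq hlam
    by_contra hre
    push_neg at hre
    have habs : 1 ≤ ‖Complex.exp lam‖ := by
      rw [Complex.norm_exp]
      exact Real.one_le_exp hre
    obtain ⟨c, rfl⟩ := main lam w hw habs heq
    have h0 := hconst c
    rw [heq] at h0
    rcases smul_eq_zero.mp h0 with h | h
    · exact hlam h
    · exact hw h
end

section
/- Let D be a generator matrix on a finite set X such that every entry of exp(D) is strictly positive, let π be a probability vector invariant for D, let u : X → ℝ, set ȳ = Σ_i π(i)u(i) and ũ = u − ȳ·𝟏 where 𝟏 is the all-ones vector. Then the integral h(x) = ∫₀^∞ (exp(tD) ũ)(x) dt converges for every x ∈ X, and h solves Poisson's equation D h = −ũ. -/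
open MeasureTheory NormedSpace Matrix Set Filter Finset Topology

namespace Stmt7Aux

variable {X : Type*} [Fintype X] [DecidableEq X]

/-- `A ↦ A *ᵥ v` as a continuous linear map. -/
noncomputable def mvCLM (v : X → ℝ) : Matrix X X ℝ →L[ℝ] (X → ℝ) where
  toLinearMap :=
    { toFun := fun A => A *ᵥ v
      map_add' := fun A B => Matrix.add_mulVec A B v
      map_smul' := fun c A => Matrix.smul_mulVec c A v }
  cont := by
    refine continuous_pi fun x => ?_
    have : (fun A : Matrix X X ℝ => (A *ᵥ v) x) = fun A => ∑ j, A x j * v j := by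
      funext A; rfl
    rw [this]
    exact continuous_finset_sum _ fun j _ =>
      (Continuous.mul (f := fun A : Matrix X X ℝ => A x j) ((continuous_apply j).comp (continuous_apply x)) continuous_const)

/-- `A ↦ π ᵥ* A` as a continuous linear map. -/
noncomputable def vmCLM (π : X → ℝ) : Matrix X X ℝ →L[ℝ] (X → ℝ) where
  toLinearMap :=
    { toFun := fun A => π ᵥ* A
      map_add' := fun A B => by funext j; simp [Matrix.vecMul, dotProduct, mul_add, Finset.sum_add_distrib]
      map_smul' := fun c A => by funext j; simp [Matrix.vecMul, dotProduct, Finset.mul_sum, mul_left_comm] }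
  cont := by
    refine continuous_pi fun j => ?_
    have : (fun A : Matrix X X ℝ => (π ᵥ* A) j) = fun A => ∑ i, π i * A i j := by
      funext A; rfl
    rw [this]
    exact continuous_finset_sum _ fun i _ =>
      continuous_const.mul ((continuous_apply j).comp (continuous_apply i))

/-- entry as a continuous linear map. -/
noncomputable def enCLM (i j : X) : Matrix X X ℝ →L[ℝ] ℝ where
  toLinearMap :=
    { toFun := fun A => A i j
      map_add' := fun A B => rfl
      map_smul' := fun c A => rfl }
  cont := (continuous_apply j).comp (continuous_apply i)

end Stmt7Aux

namespace Stmt7Aux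
variable {X : Type*} [Fintype X] [DecidableEq X]

theorem clm_exp {E : Type*} [NormedAddCommGroup E] [NormedSpace ℝ E]
    (L : Matrix X X ℝ →L[ℝ] E) (A : Matrix X X ℝ) :
    L (exp A) = ∑' n : ℕ, ((n.factorial : ℝ)⁻¹) • L (A ^ n) := by
  letI : SeminormedRing (Matrix X X ℝ) := Matrix.linftyOpSemiNormedRing
  letI : NormedRing (Matrix X X ℝ) := Matrix.linftyOpNormedRing
  letI : NormedAlgebra ℝ (Matrix X X ℝ) := Matrix.linftyOpNormedAlgebra
  rw [exp_eq_tsum ℝ, L.map_tsum (expSeries_summable' (𝕂 := ℝ) A)]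
  simp

/-- fixed vectors of the generator are fixed by the semigroup -/
theorem exp_mulVec_fixed (A : Matrix X X ℝ) (v : X → ℝ) (hv : A *ᵥ v = 0) :
    exp A *ᵥ v = v := by
  have key : ∀ n : ℕ, A ^ n *ᵥ v = if n = 0 then v else 0 := by
    intro n
    induction n with
    | zero => simp [Matrix.one_mulVec]
    | succ k ih =>
      rw [pow_succ, ← Matrix.mulVec_mulVec, hv, if_neg (Nat.succ_ne_zero k)]
      simp [Matrix.mulVec_zero]
  have h1 : exp A *ᵥ v = mvCLM v (exp A) := rfl
  rw [h1, clm_exp]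
  have h2 : ∀ n : ℕ, ((n.factorial : ℝ)⁻¹) • mvCLM v (A ^ n) = if n = 0 then v else 0 := by
    intro n
    show ((n.factorial : ℝ)⁻¹) • (A ^ n *ᵥ v) = _
    rw [key n]
    split <;> simp_all
  rw [tsum_congr h2, tsum_eq_single 0 (fun n hn => if_neg hn)]
  simp

theorem exp_vecMul_fixed (A : Matrix X X ℝ) (π : X → ℝ) (hπ : π ᵥ* A = 0) :
    π ᵥ* exp A = π := by
  have key : ∀ n : ℕ, π ᵥ* (A ^ n) = if n = 0 then π else 0 := by
    intro n
    induction n with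
    | zero => simp [Matrix.vecMul_one]
    | succ k ih =>
      rw [pow_succ, ← Matrix.vecMul_vecMul, ih]
      split
      · subst ‹k = 0›; simp [hπ]
      · simp [Matrix.zero_vecMul]
  have h1 : π ᵥ* exp A = vmCLM π (exp A) := rfl
  rw [h1, clm_exp]
  have h2 : ∀ n : ℕ, ((n.factorial : ℝ)⁻¹) • vmCLM π (A ^ n) = if n = 0 then π else 0 := by
    intro n
    show ((n.factorial : ℝ)⁻¹) • (π ᵥ* (A ^ n)) = _
    rw [key n]
    split <;> simp_all
  rw [tsum_congr h2, tsum_eq_single 0 (fun n hn => if_neg hn)]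
  simp

end Stmt7Aux

namespace Stmt7Aux
variable {X : Type*} [Fintype X] [DecidableEq X]

theorem pow_entry_nonneg {N : Matrix X X ℝ} (hN : ∀ i j, 0 ≤ N i j) (n : ℕ) :
    ∀ i j, 0 ≤ (N ^ n) i j := by
  induction n with
  | zero => intro i j; by_cases h : i = j <;> simp [pow_zero, Matrix.one_apply, h]
  | succ k ih =>
    intro i j
    rw [pow_succ, Matrix.mul_apply]
    exact Finset.sum_nonneg fun l _ => mul_nonneg (ih i l) (hN l j)

theorem exp_entry_nonneg {N : Matrix X X ℝ} (hN : ∀ i j, 0 ≤ N i j) (i j : X) :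
    0 ≤ exp N i j := by
  have h1 : exp N i j = enCLM i j (exp N) := rfl
  rw [h1, clm_exp]
  refine tsum_nonneg fun n => ?_
  have h2 : enCLM i j (N ^ n) = (N ^ n) i j := rfl
  rw [smul_eq_mul, h2]
  exact mul_nonneg (inv_nonneg.2 (Nat.cast_nonneg _)) (pow_entry_nonneg hN n i j)

theorem exp_gen_entry_nonneg (D : Matrix X X ℝ) (hoff : ∀ i j, i ≠ j → 0 ≤ D i j)
    {t : ℝ} (ht : 0 ≤ t) (i j : X) : 0 ≤ exp (t • D) i j := by
  set c : ℝ := ∑ k, |D k k| with hc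
  have hcD : ∀ a, -D a a ≤ c := by
    intro a
    calc -D a a ≤ |D a a| := neg_le_abs _
    _ ≤ c := Finset.single_le_sum (f := fun k => |D k k|) (fun k _ => abs_nonneg _) (Finset.mem_univ a)
  set N : Matrix X X ℝ := t • D + (t * c) • (1 : Matrix X X ℝ) with hNdef
  have hN : ∀ a b, 0 ≤ N a b := by
    intro a b
    by_cases hab : a = b
    · subst hab
      have : N a a = t * (D a a + c) := by
        simp [hNdef, Matrix.one_apply]; ring
      rw [this]
      exact mul_nonneg ht (by linarith [hcD a])
    · have : N a b = t * D a b := by simp [hNdef, Matrix.one_apply, hab]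
      rw [this]
      exact mul_nonneg ht (hoff a b hab)
  have hsplit : t • D = N + (-(t * c)) • (1 : Matrix X X ℝ) := by
    rw [hNdef]; module
  have hcomm : Commute N ((-(t * c)) • (1 : Matrix X X ℝ)) := by
    refine (Commute.one_right N).smul_right _
  rw [hsplit, Matrix.exp_add_of_commute _ _ hcomm]
  have hscal : exp ((-(t * c)) • (1 : Matrix X X ℝ)) = Real.exp (-(t * c)) • 1 := by
    letI : SeminormedRing (Matrix X X ℝ) := Matrix.linftyOpSemiNormedRing
    letI : NormedRing (Matrix X X ℝ) := Matrix.linftyOpNormedRing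
    letI : NormedAlgebra ℝ (Matrix X X ℝ) := Matrix.linftyOpNormedAlgebra
    letI : NormedAlgebra ℚ (Matrix X X ℝ) := Matrix.linftyOpNormedAlgebra
    have h1 : ((-(t * c)) • (1 : Matrix X X ℝ)) = algebraMap ℝ (Matrix X X ℝ) (-(t * c)) := by
      rw [Algebra.algebraMap_eq_smul_one]
    have e := algebraMap_exp_comm (𝕂 := ℝ) (𝔸 := Matrix X X ℝ) (-(t * c))
    rw [← h1, Algebra.algebraMap_eq_smul_one, ← Real.exp_eq_exp_ℝ] at e
    exact e.symm
  rw [hscal]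
  have : (exp N * (Real.exp (-(t * c)) • 1)) i j = Real.exp (-(t * c)) * exp N i j := by
    rw [mul_smul_comm, mul_one]
    simp
  rw [this]
  exact mul_nonneg (Real.exp_nonneg _) (exp_entry_nonneg hN i j)

end Stmt7Aux

namespace Stmt7Aux
variable {X : Type*} [Fintype X] [DecidableEq X] [Nonempty X]

noncomputable def osc (w : X → ℝ) : ℝ :=
  Finset.univ.sup' Finset.univ_nonempty w - Finset.univ.inf' Finset.univ_nonempty w

theorem osc_nonneg (w : X → ℝ) : 0 ≤ osc w := by
  obtain ⟨x⟩ := ‹Nonempty X›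
  have h1 : Finset.univ.inf' Finset.univ_nonempty w ≤ w x :=
    Finset.inf'_le w (Finset.mem_univ x)
  have h2 : w x ≤ Finset.univ.sup' Finset.univ_nonempty w :=
    Finset.le_sup' w (Finset.mem_univ x)
  rw [osc]; linarith

theorem doeblin_step {P : Matrix X X ℝ} {δ : ℝ} (hδ : 0 ≤ δ) (hP : ∀ i j, δ ≤ P i j)
    (hrowP : ∀ i, ∑ j, P i j = 1) (v : X → ℝ) :
    osc (P *ᵥ v) ≤ (1 - (Fintype.card X : ℝ) * δ) * osc v := by
  obtain ⟨i, -, hi⟩ := Finset.exists_mem_eq_sup' Finset.univ_nonempty (P *ᵥ v)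
  obtain ⟨k, -, hk⟩ := Finset.exists_mem_eq_inf' Finset.univ_nonempty (P *ᵥ v)
  set m := Finset.univ.inf' Finset.univ_nonempty v with hm
  set M := Finset.univ.sup' Finset.univ_nonempty v with hM
  have hvm : ∀ j, m ≤ v j := fun j => Finset.inf'_le v (Finset.mem_univ j)
  have hvM : ∀ j, v j ≤ M := fun j => Finset.le_sup' v (Finset.mem_univ j)
  have key : (P *ᵥ v) i - (P *ᵥ v) k = ∑ j, (P i j - P k j) * (v j - m) := by
    simp only [Matrix.mulVec, dotProduct, sub_mul, mul_sub, Finset.sum_sub_distrib,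
      ← Finset.sum_mul, hrowP i, hrowP k]
    ring
  have step1 : ∑ j, (P i j - P k j) * (v j - m) ≤ ∑ j, (P i j - δ) * (M - m) := by
    refine Finset.sum_le_sum fun j _ => ?_
    calc (P i j - P k j) * (v j - m) ≤ (P i j - δ) * (v j - m) :=
          mul_le_mul_of_nonneg_right (by linarith [hP k j]) (by linarith [hvm j])
    _ ≤ (P i j - δ) * (M - m) :=
          mul_le_mul_of_nonneg_left (by linarith [hvM j]) (by linarith [hP i j])
  have step2 : ∑ j, (P i j - δ) * (M - m) = (1 - (Fintype.card X : ℝ) * δ) * (M - m) := by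
    rw [← Finset.sum_mul]
    congr 1
    rw [Finset.sum_sub_distrib, hrowP i, Finset.sum_const, Finset.card_univ]
    simp [nsmul_eq_mul]
  have : osc (P *ᵥ v) = (P *ᵥ v) i - (P *ᵥ v) k := by rw [osc, ← hi, ← hk]
  rw [this, key, osc, ← hM, ← hm]
  exact step1.trans (le_of_eq step2)

theorem abs_le_osc {π w : X → ℝ} (hπnn : ∀ i, 0 ≤ π i) (hπsum : ∑ i, π i = 1)
    (hw : ∑ i, π i * w i = 0) (x : X) : |w x| ≤ osc w := by
  set m := Finset.univ.inf' Finset.univ_nonempty w with hm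
  set M := Finset.univ.sup' Finset.univ_nonempty w with hM
  have hvm : ∀ j, m ≤ w j := fun j => Finset.inf'_le w (Finset.mem_univ j)
  have hvM : ∀ j, w j ≤ M := fun j => Finset.le_sup' w (Finset.mem_univ j)
  have hm0 : m ≤ 0 := by
    have h1 : ∑ i, π i * m ≤ ∑ i, π i * w i :=
      Finset.sum_le_sum fun i _ => mul_le_mul_of_nonneg_left (hvm i) (hπnn i)
    rw [hw, ← Finset.sum_mul, hπsum, one_mul] at h1
    exact h1
  have hM0 : 0 ≤ M := by
    have h1 : ∑ i, π i * w i ≤ ∑ i, π i * M :=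
      Finset.sum_le_sum fun i _ => mul_le_mul_of_nonneg_left (hvM i) (hπnn i)
    rw [hw, ← Finset.sum_mul, hπsum, one_mul] at h1
    exact h1
  rw [abs_le, osc, ← hM, ← hm]
  constructor
  · linarith [hvm x]
  · linarith [hvM x]

end Stmt7Aux

namespace Stmt7Aux
variable {X : Type*} [Fintype X] [DecidableEq X] [Nonempty X]

theorem decay (D : Matrix X X ℝ) (hoff : ∀ i j, i ≠ j → 0 ≤ D i j)
    (hrow : ∀ i, ∑ j, D i j = 0) (hirr : ∀ i j, 0 < exp D i j)
    (π : X → ℝ) (hπnn : ∀ i, 0 ≤ π i) (hπsum : ∑ i, π i = 1)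
    (hπinv : ∀ j, ∑ i, π i * D i j = 0) (v : X → ℝ) (hv : ∑ i, π i * v i = 0) :
    ∃ r : ℝ, 1/2 ≤ r ∧ r < 1 ∧
      ∀ t : ℝ, 0 ≤ t → ∀ x, |(exp (t • D) *ᵥ v) x| ≤ osc v * r ^ (t - 1) := by
  have honev : D *ᵥ (fun _ => (1:ℝ)) = 0 := by
    funext i; simp [Matrix.mulVec, dotProduct, hrow i]
  have hrows : ∀ s : ℝ, ∀ i, ∑ j, exp (s • D) i j = 1 := by
    intro s i
    have h0 : (s • D) *ᵥ (fun _ => (1:ℝ)) = 0 := by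
      rw [Matrix.smul_mulVec, honev, smul_zero]
    have h1 := congrFun (exp_mulVec_fixed (s • D) _ h0) i
    simpa [Matrix.mulVec, dotProduct] using h1
  have hnn : ∀ s : ℝ, 0 ≤ s → ∀ i j, 0 ≤ exp (s • D) i j :=
    fun s hs => exp_gen_entry_nonneg D hoff hs
  set E := exp D with hE
  set δ : ℝ := Finset.univ.inf' Finset.univ_nonempty
      (fun i => Finset.univ.inf' Finset.univ_nonempty (fun j => E i j)) with hδdef
  have hδpos : 0 < δ := by
    rw [hδdef, Finset.lt_inf'_iff]
    intro i _
    rw [Finset.lt_inf'_iff]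
    intro j _
    exact hirr i j
  have hδle : ∀ i j, δ ≤ E i j := by
    intro i j
    calc δ ≤ Finset.univ.inf' Finset.univ_nonempty (fun j => E i j) :=
          Finset.inf'_le _ (Finset.mem_univ i)
    _ ≤ E i j := Finset.inf'_le _ (Finset.mem_univ j)
  set r0 : ℝ := 1 - (Fintype.card X : ℝ) * δ with hr0
  have hE1 : E = exp ((1:ℝ) • D) := by rw [one_smul]
  have hErows : ∀ i, ∑ j, E i j = 1 := by intro i; rw [hE1]; exact hrows 1 i
  have hr0nn : 0 ≤ r0 := by
    obtain ⟨i⟩ := ‹Nonempty X›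
    have h1 : (Fintype.card X : ℝ) * δ ≤ ∑ j, E i j := by
      calc (Fintype.card X : ℝ) * δ = ∑ _j : X, δ := by
            rw [Finset.sum_const, Finset.card_univ, nsmul_eq_mul]
      _ ≤ ∑ j, E i j := Finset.sum_le_sum fun j _ => hδle i j
    rw [hErows i] at h1
    rw [hr0]; linarith
  have hr0lt : r0 < 1 := by
    have h1 : 0 < (Fintype.card X : ℝ) := Nat.cast_pos.2 Fintype.card_pos
    rw [hr0]; nlinarith
  have hcontract : ∀ w, osc (E *ᵥ w) ≤ r0 * osc w :=
    fun w => doeblin_step hδpos.le hδle hErows w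
  have hmono : ∀ s : ℝ, 0 ≤ s → ∀ w, osc (exp (s • D) *ᵥ w) ≤ osc w := by
    intro s hs w
    have h := doeblin_step (le_refl (0:ℝ)) (fun i j => hnn s hs i j) (hrows s) w
    simpa using h
  have hpow : ∀ (n : ℕ) (w : X → ℝ), osc ((E ^ n) *ᵥ w) ≤ r0 ^ n * osc w := by
    intro n
    induction n with
    | zero => intro w; simp [Matrix.one_mulVec]
    | succ k ih =>
      intro w
      rw [pow_succ', ← Matrix.mulVec_mulVec]
      calc osc (E *ᵥ (E ^ k *ᵥ w)) ≤ r0 * osc (E ^ k *ᵥ w) := hcontract _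
      _ ≤ r0 * (r0 ^ k * osc w) := mul_le_mul_of_nonneg_left (ih w) hr0nn
      _ = r0 ^ (k + 1) * osc w := by ring
  have hπD : π ᵥ* D = 0 := by
    funext j; simpa [Matrix.vecMul, dotProduct] using hπinv j
  have hcent : ∀ t : ℝ, ∑ i, π i * (exp (t • D) *ᵥ v) i = 0 := by
    intro t
    have h0 : π ᵥ* (t • D) = 0 := by
      funext j
      have h2 : (π ᵥ* (t • D)) j = t * ∑ i, π i * D i j := by
        simp only [Matrix.vecMul, dotProduct, Matrix.smul_apply, smul_eq_mul, Finset.mul_sum]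
        exact Finset.sum_congr rfl fun i _ => by ring
      have h3 : (0 : X → ℝ) j = 0 := rfl
      rw [h2, hπinv j, mul_zero, h3]
    have h1 := exp_vecMul_fixed (t • D) π h0
    have h2 : ∑ i, π i * (exp (t • D) *ᵥ v) i = π ⬝ᵥ (exp (t • D) *ᵥ v) := rfl
    rw [h2, Matrix.dotProduct_mulVec, h1]
    exact hv
  set r : ℝ := max r0 (1/2) with hrdef
  have hrpos : (0:ℝ) < r := lt_of_lt_of_le (by norm_num) (le_max_right _ _)
  have hrlt : r < 1 := max_lt hr0lt (by norm_num)
  refine ⟨r, le_max_right _ _, hrlt, ?_⟩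
  intro t ht x
  set n : ℕ := ⌊t⌋₊ with hn
  have hsn : 0 ≤ t - n := sub_nonneg.2 (Nat.floor_le ht)
  have hsplit : exp (t • D) = E ^ n * exp ((t - n) • D) := by
    have h1 : t • D = (n : ℝ) • D + (t - (n : ℝ)) • D := by
      rw [← add_smul]; ring_nf
    rw [h1, Matrix.exp_add_of_commute _ _ (((Commute.refl D).smul_left _).smul_right _)]
    congr 1
    rw [hE, ← Matrix.exp_nsmul n D, Nat.cast_smul_eq_nsmul]
  have hosc : osc (exp (t • D) *ᵥ v) ≤ r0 ^ n * osc v := by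
    rw [hsplit, ← Matrix.mulVec_mulVec]
    calc osc (E ^ n *ᵥ (exp ((t - n) • D) *ᵥ v))
        ≤ r0 ^ n * osc (exp ((t - n) • D) *ᵥ v) := hpow n _
    _ ≤ r0 ^ n * osc v :=
        mul_le_mul_of_nonneg_left (hmono _ hsn v) (pow_nonneg hr0nn n)
  have habs := abs_le_osc hπnn hπsum (hcent t) x
  have hrn : r0 ^ n ≤ r ^ (t - 1 : ℝ) := by
    have h1 : r0 ^ n ≤ r ^ n := pow_le_pow_left₀ hr0nn (le_max_left _ _) n
    have h2 : r ^ ((n : ℝ)) = r ^ n := Real.rpow_natCast r n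
    have h3 : r ^ (t - 1 : ℝ) ≥ r ^ ((n : ℝ)) :=
      Real.rpow_le_rpow_of_exponent_ge hrpos hrlt.le
        (by have := Nat.lt_floor_add_one t; rw [← hn] at this; linarith)
    rw [h2] at h3
    linarith
  calc |(exp (t • D) *ᵥ v) x| ≤ osc (exp (t • D) *ᵥ v) := habs
  _ ≤ r0 ^ n * osc v := hosc
  _ ≤ r ^ (t - 1 : ℝ) * osc v := mul_le_mul_of_nonneg_right hrn (osc_nonneg v)
  _ = osc v * r ^ (t - 1 : ℝ) := mul_comm _ _

end Stmt7Aux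

namespace Stmt7Aux
variable {X : Type*} [Fintype X] [DecidableEq X] [Nonempty X]

theorem cont_flow (D : Matrix X X ℝ) (v : X → ℝ) (x : X) :
    Continuous fun t : ℝ => (exp (t • D) *ᵥ v) x := by
  letI : SeminormedRing (Matrix X X ℝ) := Matrix.linftyOpSemiNormedRing
  letI : NormedRing (Matrix X X ℝ) := Matrix.linftyOpNormedRing
  letI : NormedAlgebra ℝ (Matrix X X ℝ) := Matrix.linftyOpNormedAlgebra
  letI : NormedAlgebra ℚ (Matrix X X ℝ) := Matrix.linftyOpNormedAlgebra
  have h1 : Continuous fun t : ℝ => exp (t • D) :=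
    exp_continuous.comp (continuous_id.smul continuous_const)
  exact ((continuous_apply x).comp (mvCLM v).continuous).comp h1

theorem hasDeriv_flow (D : Matrix X X ℝ) (v : X → ℝ) (x : X) (t : ℝ) :
    HasDerivAt (fun s : ℝ => (exp (s • D) *ᵥ v) x)
      ((exp (t • D) *ᵥ (D *ᵥ v)) x) t := by
  letI : SeminormedRing (Matrix X X ℝ) := Matrix.linftyOpSemiNormedRing
  letI : NormedRing (Matrix X X ℝ) := Matrix.linftyOpNormedRing
  letI : NormedAlgebra ℝ (Matrix X X ℝ) := Matrix.linftyOpNormedAlgebra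
  have h1 : HasDerivAt (fun s : ℝ => exp (s • D)) (exp (t • D) * D) t :=
    hasDerivAt_exp_smul_const D t
  set L : Matrix X X ℝ →L[ℝ] ℝ := (ContinuousLinearMap.proj x).comp (mvCLM v) with hL
  have h2 : HasDerivAt (fun s : ℝ => L (exp (s • D))) (L (exp (t • D) * D)) t :=
    L.hasFDerivAt.comp_hasDerivAt t h1
  have h3 : L (exp (t • D) * D) = (exp (t • D) *ᵥ (D *ᵥ v)) x := by
    show ((exp (t • D) * D) *ᵥ v) x = _
    rw [← Matrix.mulVec_mulVec]
  exact h3 ▸ h2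

theorem tendsto_and_integrable (D : Matrix X X ℝ) (hoff : ∀ i j, i ≠ j → 0 ≤ D i j)
    (hrow : ∀ i, ∑ j, D i j = 0) (hirr : ∀ i j, 0 < exp D i j)
    (π : X → ℝ) (hπnn : ∀ i, 0 ≤ π i) (hπsum : ∑ i, π i = 1)
    (hπinv : ∀ j, ∑ i, π i * D i j = 0) (v : X → ℝ) (hv : ∑ i, π i * v i = 0) (x : X) :
    IntegrableOn (fun t : ℝ => (exp (t • D) *ᵥ v) x) (Ioi 0) ∧
      Tendsto (fun t : ℝ => (exp (t • D) *ᵥ v) x) atTop (𝓝 0) := by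
  obtain ⟨r, hr2, hr1, hbd⟩ := decay D hoff hrow hirr π hπnn hπsum hπinv v hv
  have hrpos : (0:ℝ) < r := lt_of_lt_of_le (by norm_num) hr2
  set b : ℝ := -Real.log r with hb
  have hbpos : 0 < b := by
    rw [hb]
    simpa using Real.log_neg hrpos hr1
  have hgeq : ∀ t : ℝ, osc v * r ^ (t - 1 : ℝ) = (osc v * Real.exp b) * Real.exp (-b * t) := by
    intro t
    rw [Real.rpow_def_of_pos hrpos]
    have h1 : Real.log r * (t - 1) = b + -b * t := by rw [hb]; ring
    rw [h1, Real.exp_add]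
    ring
  constructor
  · have hg : IntegrableOn (fun t : ℝ => (osc v * Real.exp b) * Real.exp (-b * t)) (Ioi 0) :=
      (exp_neg_integrableOn_Ioi 0 hbpos).const_mul _
    refine Integrable.mono' hg ((cont_flow D v x).aestronglyMeasurable) ?_
    filter_upwards [ae_restrict_mem measurableSet_Ioi] with t ht
    rw [Real.norm_eq_abs, ← hgeq t]
    exact hbd t (le_of_lt ht) x
  · have hg0 : Tendsto (fun t : ℝ => osc v * r ^ (t - 1 : ℝ)) atTop (𝓝 0) := by
      have h1 : Tendsto (fun t : ℝ => t - 1) atTop atTop :=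
        tendsto_atTop_add_const_right atTop (-1) tendsto_id
      have h2 : Tendsto (fun s : ℝ => r ^ (s : ℝ)) atTop (𝓝 0) :=
        tendsto_rpow_atTop_of_base_lt_one r (by linarith) hr1
      have h3 : Tendsto (fun t : ℝ => r ^ (t - 1 : ℝ)) atTop (𝓝 0) := h2.comp h1
      simpa using h3.const_mul (osc v)
    refine squeeze_zero_norm' ?_ hg0
    filter_upwards [Ioi_mem_atTop (0:ℝ)] with t ht
    rw [Real.norm_eq_abs]
    exact hbd t (le_of_lt ht) x

end Stmt7Aux





/-- For an irreducible generator matrix with invariant probability vector `π`, the integral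
`h(x) = ∫₀^∞ (exp(tD)ũ)(x) dt` of the centered utility `ũ = u − ȳ𝟏` converges and solves
Poisson's equation `Dh = −ũ`. -/
theorem stmt_7 {X : Type*} [Fintype X] [DecidableEq X]
    (D : Matrix X X ℝ)
    (hoff : ∀ i j, i ≠ j → 0 ≤ D i j) (hrow : ∀ i, ∑ j, D i j = 0)
    (hirr : ∀ i j, 0 < NormedSpace.exp D i j)
    (π : X → ℝ) (hπnn : ∀ i, 0 ≤ π i) (hπsum : ∑ i, π i = 1)
    (hπinv : ∀ j, ∑ i, π i * D i j = 0)
    (u : X → ℝ) (ybar : ℝ) (hybar : ybar = ∑ i, π i * u i)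
    (util : X → ℝ) (hutil : ∀ i, util i = u i - ybar)
    (h : X → ℝ)
    (hh : ∀ x, h x = ∫ t in Set.Ioi (0 : ℝ), (NormedSpace.exp (t • D)).mulVec util x) :
    (∀ x, MeasureTheory.IntegrableOn
        (fun t : ℝ => (NormedSpace.exp (t • D)).mulVec util x) (Set.Ioi 0)) ∧
    D.mulVec h = -util := by
  have hne : Nonempty X := by
    by_contra hcon
    rw [not_nonempty_iff] at hcon
    rw [Finset.sum_eq_zero (fun i _ => (hcon.elim i))] at hπsum
    norm_num at hπsum
  have hcent : ∑ i, π i * util i = 0 := by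
    have : ∀ i, π i * util i = π i * u i - π i * ybar := fun i => by rw [hutil i]; ring
    rw [Finset.sum_congr rfl fun i _ => this i, Finset.sum_sub_distrib, ← hybar,
      ← Finset.sum_mul, hπsum]
    ring
  have hint : ∀ x, MeasureTheory.IntegrableOn
      (fun t : ℝ => (exp (t • D) *ᵥ util) x) (Set.Ioi 0) :=
    fun x => (Stmt7Aux.tendsto_and_integrable D hoff hrow hirr π hπnn hπsum hπinv
      util hcent x).1
  refine ⟨hint, ?_⟩
  have hπD : π ᵥ* D = 0 := by
    funext j; simpa [Matrix.vecMul, dotProduct] using hπinv j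
  have hcentD : ∑ i, π i * (D *ᵥ util) i = 0 := by
    have h1 : ∑ i, π i * (D *ᵥ util) i = π ⬝ᵥ (D *ᵥ util) := rfl
    rw [h1, Matrix.dotProduct_mulVec, hπD, zero_dotProduct]
  have hDint : ∀ y, MeasureTheory.IntegrableOn
      (fun t : ℝ => (exp (t • D) *ᵥ (D *ᵥ util)) y) (Set.Ioi 0) :=
    fun y => (Stmt7Aux.tendsto_and_integrable D hoff hrow hirr π hπnn hπsum hπinv
      (D *ᵥ util) hcentD y).1
  have htend : ∀ y, Tendsto (fun t : ℝ => (exp (t • D) *ᵥ util) y) atTop (𝓝 0) :=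
    fun y => (Stmt7Aux.tendsto_and_integrable D hoff hrow hirr π hπnn hπsum hπinv
      util hcent y).2
  have hftc : ∀ y, (∫ t in Set.Ioi (0:ℝ), (exp (t • D) *ᵥ (D *ᵥ util)) y) = -util y := by
    intro y
    have h0 := MeasureTheory.integral_Ioi_of_hasDerivAt_of_tendsto' (a := 0) (m := 0)
      (fun t _ => Stmt7Aux.hasDeriv_flow D util y t) (hDint y) (htend y)
    rw [h0]
    have h1 : ((0:ℝ) • D) = 0 := by rw [zero_smul]
    rw [h1, exp_zero, Matrix.one_mulVec]
    ring
  funext x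
  have h2 : D.mulVec h x = ∑ j, D x j * h j := rfl
  have h3 : ∀ j, D x j * h j
      = ∫ t in Set.Ioi (0:ℝ), D x j * (exp (t • D) *ᵥ util) j := by
    intro j
    rw [hh j, MeasureTheory.integral_const_mul]
  have h4 : ∑ j, D x j * h j
      = ∫ t in Set.Ioi (0:ℝ), ∑ j, D x j * (exp (t • D) *ᵥ util) j := by
    rw [Finset.sum_congr rfl fun j _ => h3 j]
    exact (MeasureTheory.integral_finset_sum Finset.univ
      (fun j _ => ((hint j).const_mul (D x j)))).symm
  have h5 : ∀ t : ℝ, ∑ j, D x j * (exp (t • D) *ᵥ util) j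
      = (exp (t • D) *ᵥ (D *ᵥ util)) x := by
    intro t
    have e1 : ∑ j, D x j * (exp (t • D) *ᵥ util) j = (D *ᵥ (exp (t • D) *ᵥ util)) x := rfl
    have e2 : Commute D (exp (t • D)) :=
      Commute.exp_right ((Commute.refl D).smul_right t)
    rw [e1, Matrix.mulVec_mulVec, e2.eq, ← Matrix.mulVec_mulVec]
  rw [h2, h4]
  calc (∫ t in Set.Ioi (0:ℝ), ∑ j, D x j * (exp (t • D) *ᵥ util) j)
      = ∫ t in Set.Ioi (0:ℝ), (exp (t • D) *ᵥ (D *ᵥ util)) x := by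
        refine MeasureTheory.integral_congr_ae (Filter.Eventually.of_forall fun t => h5 t)
  _ = -util x := hftc x
  _ = (-util) x := rfl
end

section
/- Let D be a generator matrix on a finite set X satisfying detailed balance with respect to a strictly positive probability vector π, let u : X → ℝ, ȳ = Σ_i π(i)u(i), ũ = u − ȳ·𝟏, and let h : X → ℝ solve D h = −ũ. Define D′_0(i,j) = −h(i) D(i,j) + D(i,j) h(j) + ũ(i)·𝟙{i=j} and B_j = Σ_i π(i) D′_0(i,j). Then B_j = 2 π(j) ũ(j) for every j ∈ X. -/
/-- Reversible case of the formula for the input vector of the linearized mean-field model: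
if the generator `D` satisfies detailed balance w.r.t. `π`, then
`B_j = Σ_i π(i)D′₀(i,j) = 2π(j)ũ(j)`. -/
theorem stmt_11 {X : Type*} [Fintype X] [DecidableEq X]
    (D : Matrix X X ℝ)
    (hoff : ∀ i j, i ≠ j → 0 ≤ D i j) (hrow : ∀ i, ∑ j, D i j = 0)
    (π : X → ℝ) (hπpos : ∀ i, 0 < π i) (hπsum : ∑ i, π i = 1)
    (hrev : ∀ i j, π i * D i j = π j * D j i)
    (u : X → ℝ) (ybar : ℝ) (hybar : ybar = ∑ i, π i * u i)
    (util : X → ℝ) (hutil : ∀ i, util i = u i - ybar)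
    (h : X → ℝ) (hPoisson : D.mulVec h = -util)
    (D'0 : Matrix X X ℝ)
    (hD'0 : ∀ i j, D'0 i j = -(h i) * D i j + D i j * h j + util i * (if i = j then 1 else 0))
    (B : X → ℝ) (hB : ∀ j, B j = ∑ i, π i * D'0 i j) :
    ∀ j, B j = 2 * π j * util j := by
  intro j
  have hDh : ∀ j, ∑ i, D j i * h i = -util j := by
    intro j
    have := congrFun hPoisson j
    simpa [Matrix.mulVec, dotProduct] using this
  have h1 : ∑ i, π i * (h i * D i j) = π j * (-util j) := by
    calc ∑ i, π i * (h i * D i j) = ∑ i, π j * (D j i * h i) := by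
          apply Finset.sum_congr rfl
          intro i _
          rw [show π i * (h i * D i j) = π i * D i j * h i by ring, hrev i j]
          ring
      _ = π j * ∑ i, D j i * h i := by rw [Finset.mul_sum]
      _ = π j * (-util j) := by rw [hDh j]
  have h2 : ∑ i, π i * D i j = 0 := by
    calc ∑ i, π i * D i j = ∑ i, π j * D j i := by
          exact Finset.sum_congr rfl fun i _ => hrev i j
      _ = π j * ∑ i, D j i := by rw [Finset.mul_sum]
      _ = 0 := by rw [hrow j]; ring
  have h3 : ∑ i, π i * (util i * (if i = j then 1 else 0)) = π j * util j := by
    rw [Finset.sum_eq_single j]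
    · simp
    · intro i _ hij; simp [hij]
    · intro hj; exact absurd (Finset.mem_univ j) hj
  rw [hB]
  have : ∀ i, π i * D'0 i j
      = -(π i * (h i * D i j)) + (π i * D i j) * h j + π i * (util i * (if i = j then 1 else 0)) := by
    intro i; rw [hD'0]; ring
  rw [Finset.sum_congr rfl fun i _ => this i]
  rw [Finset.sum_add_distrib, Finset.sum_add_distrib, Finset.sum_neg_distrib,
    ← Finset.sum_mul, h1, h2, h3]
  ring
end

section
/- Let D be a generator matrix on a finite set X such that every entry of exp(D) is strictly positive, let π be the invariant probability vector of D, and let B, C ∈ ℝ^X with Σ_j π(j) C_j = 0. Then for every ω ∈ ℝ with ω ≠ 0, the matrix iωI − D is invertible, the function t ↦ e^{−iωt} Σ_{i,j} B_i (exp(tD))(i,j) C_j is integrable on [0,∞), and Bᵀ (iωI − D)^{−1} C = ∫₀^∞ e^{−iωt} Σ_{i,j} B_i (exp(tD))(i,j) C_j dt. -/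
open NormedSpace MeasureTheory Finset
open scoped Matrix

namespace Stmt12Aux

variable {X : Type*} [Fintype X] [DecidableEq X]

section Master

variable (𝕜 : Type*) [RCLike 𝕜]

theorem linmap_exp {E : Type*} [NormedAddCommGroup E] [NormedSpace ℝ E]
    (L : Matrix X X 𝕜 →ₗ[ℝ] E) (A : Matrix X X 𝕜) :
    L (exp A) = ∑' (n : ℕ), (n.factorial : ℝ)⁻¹ • L (A ^ n) := by
  letI : SeminormedRing (Matrix X X 𝕜) := Matrix.linftyOpSemiNormedRing
  letI : NormedRing (Matrix X X 𝕜) := Matrix.linftyOpNormedRing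
  letI : NormedAlgebra ℝ (Matrix X X 𝕜) := Matrix.linftyOpNormedAlgebra
  have hs : Summable fun n : ℕ => (n.factorial : ℝ)⁻¹ • A ^ n := expSeries_summable' (𝕂 := ℝ) A
  have hL : Continuous L := L.continuous_of_finiteDimensional
  let L' : Matrix X X 𝕜 →L[ℝ] E := ⟨L, hL⟩
  calc L (exp A) = L' (∑' (n : ℕ), (n.factorial : ℝ)⁻¹ • A ^ n) := by
        simp only [exp_eq_tsum ℝ]; rfl
    _ = ∑' (n : ℕ), L' ((n.factorial : ℝ)⁻¹ • A ^ n) := L'.map_tsum hs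
    _ = ∑' (n : ℕ), (n.factorial : ℝ)⁻¹ • L (A ^ n) := by
        refine tsum_congr fun n => ?_
        simp [L', _root_.map_smul]

theorem exp_mulVec_apply (A : Matrix X X 𝕜) (v : X → 𝕜) (i : X) :
    (exp A *ᵥ v) i = ∑' (n : ℕ), (n.factorial : ℝ)⁻¹ • (A ^ n *ᵥ v) i := by
  have := linmap_exp 𝕜
    (L := { toFun := fun M : Matrix X X 𝕜 => (M *ᵥ v) i
            map_add' := fun M N => by simp [Matrix.add_mulVec]
            map_smul' := fun r M => by
              simp [Matrix.mulVec, dotProduct, Finset.smul_sum, smul_mul_assoc] }) A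
  simpa using this

theorem exp_vecMul_apply (A : Matrix X X 𝕜) (v : X → 𝕜) (j : X) :
    (v ᵥ* exp A) j = ∑' (n : ℕ), (n.factorial : ℝ)⁻¹ • (v ᵥ* A ^ n) j := by
  have := linmap_exp 𝕜
    (L := { toFun := fun M : Matrix X X 𝕜 => (v ᵥ* M) j
            map_add' := fun M N => by
              simp [Matrix.vecMul, dotProduct, mul_add, Finset.sum_add_distrib]
            map_smul' := fun r M => by
              simp [Matrix.vecMul, dotProduct, Finset.smul_sum, mul_smul_comm] }) A
  simpa using this

theorem exp_apply' (A : Matrix X X 𝕜) (i j : X) :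
    exp A i j = ∑' (n : ℕ), (n.factorial : ℝ)⁻¹ • (A ^ n) i j := by
  have := linmap_exp 𝕜
    (L := { toFun := fun M : Matrix X X 𝕜 => M i j
            map_add' := fun M N => rfl
            map_smul' := fun r M => rfl }) A
  exact this

end Master

section RealFacts

theorem pow_rowsum (D : Matrix X X ℝ) (hrow : ∀ i, ∑ j, D i j = 0) (n : ℕ) (i : X) :
    ∑ j, (D ^ (n + 1)) i j = 0 := by
  rw [pow_succ]
  simp only [Matrix.mul_apply]
  rw [Finset.sum_comm]
  simp [← Finset.mul_sum, hrow]

theorem exp_rowsum (D : Matrix X X ℝ) (hrow : ∀ i, ∑ j, D i j = 0) (t : ℝ) (i : X) :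
    ∑ j, exp (t • D) i j = 1 := by
  have key : ∑ j, exp (t • D) i j = (exp (t • D) *ᵥ (fun _ => 1)) i := by
    simp [Matrix.mulVec, dotProduct]
  rw [key, exp_mulVec_apply, tsum_eq_single 0]
  · simp
  · intro n hn
    obtain ⟨m, rfl⟩ := Nat.exists_eq_succ_of_ne_zero hn
    have h0 := pow_rowsum D hrow m i
    have : ((t • D) ^ (m + 1) *ᵥ (fun _ => 1)) i = 0 := by
      rw [smul_pow]
      simp [Matrix.mulVec, dotProduct, ← Finset.mul_sum, h0]
    simp [this]

theorem pow_pi (D : Matrix X X ℝ) (π : X → ℝ) (hπinv : ∀ j, ∑ i, π i * D i j = 0)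
    (n : ℕ) (j : X) : ∑ i, π i * (D ^ (n + 1)) i j = 0 := by
  induction n generalizing j with
  | zero => simpa using hπinv j
  | succ m ih =>
    rw [pow_succ]
    simp only [Matrix.mul_apply, Finset.mul_sum]
    rw [Finset.sum_comm]
    have : ∀ k, ∑ i, π i * ((D ^ (m + 1)) i k * D k j)
        = (∑ i, π i * (D ^ (m + 1)) i k) * D k j := by
      intro k
      rw [Finset.sum_mul]
      exact Finset.sum_congr rfl fun i _ => (mul_assoc _ _ _).symm
    simp [this, ih]

theorem exp_pi (D : Matrix X X ℝ) (π : X → ℝ) (hπinv : ∀ j, ∑ i, π i * D i j = 0)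
    (t : ℝ) (j : X) : ∑ i, π i * exp (t • D) i j = π j := by
  have key : ∑ i, π i * exp (t • D) i j = (π ᵥ* exp (t • D)) j := by
    simp [Matrix.vecMul, dotProduct]
  rw [key, exp_vecMul_apply, tsum_eq_single 0]
  · simp [Matrix.vecMul, dotProduct, Matrix.one_apply, mul_ite, mul_one, mul_zero]
  · intro n hn
    obtain ⟨m, rfl⟩ := Nat.exists_eq_succ_of_ne_zero hn
    have h0 := pow_pi D π hπinv m j
    have : (π ᵥ* (t • D) ^ (m + 1)) j = 0 := by
      rw [smul_pow]
      have : ∀ i, π i * (t ^ (m + 1) * (D ^ (m + 1)) i j)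
          = t ^ (m + 1) * (π i * (D ^ (m + 1)) i j) := fun i => by ring
      simp only [Matrix.vecMul, dotProduct, Matrix.smul_apply, smul_eq_mul]
      rw [Finset.sum_congr rfl fun i _ => this i, ← Finset.mul_sum, h0, mul_zero]
    simp [this]

theorem pow_entry_nonneg (A : Matrix X X ℝ) (h : ∀ i j, 0 ≤ A i j) (n : ℕ) :
    ∀ i j, 0 ≤ (A ^ n) i j := by
  induction n with
  | zero =>
    intro i j
    by_cases hij : i = j <;> simp [pow_zero, Matrix.one_apply, hij]
  | succ m ih =>
    intro i j
    rw [pow_succ, Matrix.mul_apply]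
    exact Finset.sum_nonneg fun k _ => mul_nonneg (ih i k) (h k j)

theorem exp_entry_nonneg (A : Matrix X X ℝ) (h : ∀ i j, 0 ≤ A i j) (i j : X) :
    0 ≤ exp A i j := by
  rw [exp_apply']
  refine tsum_nonneg fun n => smul_nonneg (by positivity) (pow_entry_nonneg A h n i j)

theorem exp_smul_one_real (r : ℝ) :
    exp (r • (1 : Matrix X X ℝ)) = Real.exp r • (1 : Matrix X X ℝ) := by
  letI : SeminormedRing (Matrix X X ℝ) := Matrix.linftyOpSemiNormedRing
  letI : NormedRing (Matrix X X ℝ) := Matrix.linftyOpNormedRing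
  letI : NormedAlgebra ℝ (Matrix X X ℝ) := Matrix.linftyOpNormedAlgebra
  have h1 : r • (1 : Matrix X X ℝ) = algebraMap ℝ (Matrix X X ℝ) r :=
    (Algebra.algebraMap_eq_smul_one r).symm
  rw [h1]
  erw [← algebraMap_exp_comm]
  rw [← Real.exp_eq_exp_ℝ, Algebra.algebraMap_eq_smul_one]

theorem exp_smul_one_complex (z : ℂ) :
    exp (z • (1 : Matrix X X ℂ)) = Complex.exp z • (1 : Matrix X X ℂ) := by
  letI : SeminormedRing (Matrix X X ℂ) := Matrix.linftyOpSemiNormedRing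
  letI : NormedRing (Matrix X X ℂ) := Matrix.linftyOpNormedRing
  letI : NormedAlgebra ℝ (Matrix X X ℂ) := Matrix.linftyOpNormedAlgebra
  letI : NormedAlgebra ℂ (Matrix X X ℂ) := Matrix.linftyOpNormedAlgebra
  have h1 : z • (1 : Matrix X X ℂ) = algebraMap ℂ (Matrix X X ℂ) z :=
    (Algebra.algebraMap_eq_smul_one z).symm
  rw [h1]
  erw [← algebraMap_exp_comm]
  rw [← Complex.exp_eq_exp_ℂ,
    Algebra.algebraMap_eq_smul_one]

theorem exp_smul_entry_nonneg (D : Matrix X X ℝ) (hoff : ∀ i j, i ≠ j → 0 ≤ D i j)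
    {t : ℝ} (ht : 0 ≤ t) (i j : X) : 0 ≤ exp (t • D) i j := by
  set c : ℝ := ∑ k, |D k k| with hc
  have hcnn : ∀ i, -D i i ≤ c :=
    fun i => le_trans (neg_le_abs _)
      (Finset.single_le_sum (f := fun k => |D k k|) (fun k _ => abs_nonneg _) (mem_univ i))
  have hA : ∀ i' j', 0 ≤ (D + c • (1 : Matrix X X ℝ)) i' j' := by
    intro i' j'
    by_cases hij : i' = j'
    · subst hij
      have := hcnn i'
      simp only [Matrix.add_apply, Matrix.smul_apply, Matrix.one_apply_eq, smul_eq_mul, mul_one]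
      linarith
    · simp only [Matrix.add_apply, Matrix.smul_apply, Matrix.one_apply_ne hij, smul_eq_mul,
        mul_zero, add_zero]
      exact hoff _ _ hij
  have hsplit : t • D = t • (D + c • (1 : Matrix X X ℝ)) + (-(t * c)) • 1 := by
    rw [smul_add, smul_smul]
    abel_nf
    rw [← add_smul]
    ring_nf
    simp
  have hcomm : Commute (t • (D + c • (1 : Matrix X X ℝ))) ((-(t * c)) • (1 : Matrix X X ℝ)) :=
    ((Commute.one_right _).smul_right _)
  rw [hsplit, Matrix.exp_add_of_commute _ _ hcomm, exp_smul_one_real, Matrix.mul_smul,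
    mul_one, Matrix.smul_apply, smul_eq_mul]
  exact mul_nonneg (Real.exp_nonneg _)
    (exp_entry_nonneg _ (fun i' j' => smul_nonneg ht (hA i' j')) i j)

theorem exp_smul_entry_pos (D : Matrix X X ℝ) (hoff : ∀ i j, i ≠ j → 0 ≤ D i j)
    (hrow : ∀ i, ∑ j, D i j = 0) (hirr : ∀ i j, 0 < exp D i j)
    {t : ℝ} (ht : 1 ≤ t) (i j : X) : 0 < exp (t • D) i j := by
  have hsplit : t • D = (t - 1) • D + D := by
    rw [sub_smul, one_smul, sub_add_cancel]
  have hcomm : Commute ((t - 1) • D) D := (Commute.refl D).smul_left _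
  rw [hsplit, Matrix.exp_add_of_commute _ _ hcomm, Matrix.mul_apply]
  have hnn : ∀ k, 0 ≤ exp ((t - 1) • D) i k :=
    fun k => exp_smul_entry_nonneg D hoff (by linarith) i k
  have hrow1 : ∑ k, exp ((t - 1) • D) i k = 1 := exp_rowsum D hrow _ i
  have hex : ∃ k, 0 < exp ((t - 1) • D) i k := by
    by_contra h
    push_neg at h
    have : ∑ k, exp ((t - 1) • D) i k ≤ 0 :=
      Finset.sum_nonpos fun k _ => h k
    linarith
  obtain ⟨k0, hk0⟩ := hex
  have hterm : ∀ k ∈ univ, 0 ≤ exp ((t - 1) • D) i k * exp D k j :=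
    fun k _ => mul_nonneg (hnn k) (hirr k j).le
  calc (0:ℝ) < exp ((t - 1) • D) i k0 * exp D k0 j :=
        mul_pos hk0 (hirr k0 j)
    _ ≤ ∑ k, exp ((t - 1) • D) i k * exp D k j :=
        Finset.single_le_sum hterm (mem_univ k0)

end RealFacts

section Dobrushin

variable [Nonempty X]

noncomputable def mx (w : X → ℝ) : ℝ := Finset.univ.sup' Finset.univ_nonempty w

noncomputable def mn (w : X → ℝ) : ℝ := Finset.univ.inf' Finset.univ_nonempty w

theorem le_mx (w : X → ℝ) (i : X) : w i ≤ mx w := Finset.le_sup' w (mem_univ i)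

theorem mn_le (w : X → ℝ) (i : X) : mn w ≤ w i := Finset.inf'_le w (mem_univ i)

theorem exists_mx (w : X → ℝ) : ∃ i, mx w = w i := by
  obtain ⟨i, _, h⟩ := Finset.exists_mem_eq_sup' (Finset.univ_nonempty) w
  exact ⟨i, h⟩

theorem exists_mn (w : X → ℝ) : ∃ i, mn w = w i := by
  obtain ⟨i, _, h⟩ := Finset.exists_mem_eq_inf' (Finset.univ_nonempty) w
  exact ⟨i, h⟩

theorem mn_le_mx (w : X → ℝ) : mn w ≤ mx w := by
  have i : X := Classical.arbitrary X
  exact (mn_le w i).trans (le_mx w i)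

theorem contract (Q : Matrix X X ℝ) (δ : ℝ) (hδ : ∀ i j, δ ≤ Q i j)
    (hrow : ∀ i, ∑ j, Q i j = 1) (w : X → ℝ) :
    mx (Q *ᵥ w) - mn (Q *ᵥ w) ≤ (1 - (Fintype.card X : ℝ) * δ) * (mx w - mn w) := by
  have hosc : 0 ≤ mx w - mn w := sub_nonneg.2 (mn_le_mx w)
  have key : ∀ i k, (Q *ᵥ w) i - (Q *ᵥ w) k
      ≤ (1 - (Fintype.card X : ℝ) * δ) * (mx w - mn w) := by
    intro i k
    have hsum0 : (∑ j, Q i j) - (∑ j, Q k j) = 0 := by rw [hrow, hrow]; ring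
    have step1 : (Q *ᵥ w) i - (Q *ᵥ w) k = ∑ j, (Q i j - Q k j) * (w j - mn w) := by
      have e1 : ∑ j, (Q i j - Q k j) * (w j - mn w)
          = (∑ j, Q i j * w j) - (∑ j, Q k j * w j)
            - ((∑ j, Q i j) * mn w - (∑ j, Q k j) * mn w) := by
        rw [Finset.sum_mul, Finset.sum_mul]
        rw [← Finset.sum_sub_distrib, ← Finset.sum_sub_distrib, ← Finset.sum_sub_distrib]
        exact Finset.sum_congr rfl fun j _ => by ring
      rw [e1, hrow, hrow]
      simp [Matrix.mulVec, dotProduct]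
    have step2 : ∀ j ∈ univ, (Q i j - Q k j) * (w j - mn w)
        ≤ (Q i j - min (Q i j) (Q k j)) * (mx w - mn w) := by
      intro j _
      have h1 : 0 ≤ w j - mn w := sub_nonneg.2 (mn_le w j)
      have h2 : w j - mn w ≤ mx w - mn w := by
        have := le_mx w j; linarith
      have h3 : Q i j - Q k j ≤ Q i j - min (Q i j) (Q k j) := by
        have := min_le_right (Q i j) (Q k j); linarith
      have h4 : 0 ≤ Q i j - min (Q i j) (Q k j) := by
        have := min_le_left (Q i j) (Q k j); linarith
      calc (Q i j - Q k j) * (w j - mn w)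
          ≤ (Q i j - min (Q i j) (Q k j)) * (w j - mn w) :=
            mul_le_mul_of_nonneg_right h3 h1
        _ ≤ (Q i j - min (Q i j) (Q k j)) * (mx w - mn w) :=
            mul_le_mul_of_nonneg_left h2 h4
    have step3 : ∑ j, (Q i j - min (Q i j) (Q k j)) * (mx w - mn w)
        ≤ (1 - (Fintype.card X : ℝ) * δ) * (mx w - mn w) := by
      rw [← Finset.sum_mul]
      refine mul_le_mul_of_nonneg_right ?_ hosc
      have hmin : ∀ j ∈ univ, Q i j - min (Q i j) (Q k j) ≤ Q i j - δ :=
        fun j _ => by have := le_min (hδ i j) (hδ k j); linarith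
      calc ∑ j, (Q i j - min (Q i j) (Q k j)) ≤ ∑ j, (Q i j - δ) :=
            Finset.sum_le_sum hmin
        _ = 1 - (Fintype.card X : ℝ) * δ := by
            rw [Finset.sum_sub_distrib, hrow]
            simp [Finset.card_univ, mul_comm]
    calc (Q *ᵥ w) i - (Q *ᵥ w) k = ∑ j, (Q i j - Q k j) * (w j - mn w) := step1
      _ ≤ ∑ j, (Q i j - min (Q i j) (Q k j)) * (mx w - mn w) := Finset.sum_le_sum step2
      _ ≤ _ := step3
  obtain ⟨a, ha⟩ := exists_mx (Q *ᵥ w)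
  obtain ⟨b, hb⟩ := exists_mn (Q *ᵥ w)
  rw [ha, hb]
  exact key a b

theorem abs_le_osc (π : X → ℝ) (hπnn : ∀ i, 0 ≤ π i) (hπsum : ∑ i, π i = 1)
    (w : X → ℝ) (hw : ∑ j, π j * w j = 0) (i : X) : |w i| ≤ mx w - mn w := by
  have h1 : mn w ≤ 0 := by
    by_contra h
    push_neg at h
    have hge : mn w ≤ ∑ j, π j * w j := by
      calc mn w = ∑ j, π j * mn w := by rw [← Finset.sum_mul, hπsum, one_mul]
        _ ≤ ∑ j, π j * w j :=
          Finset.sum_le_sum fun j _ => mul_le_mul_of_nonneg_left (mn_le w j) (hπnn j)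
    linarith
  have h2 : 0 ≤ mx w := by
    by_contra h
    push_neg at h
    have hle : ∑ j, π j * w j ≤ mx w := by
      calc ∑ j, π j * w j ≤ ∑ j, π j * mx w :=
            Finset.sum_le_sum fun j _ => mul_le_mul_of_nonneg_left (le_mx w j) (hπnn j)
        _ = mx w := by rw [← Finset.sum_mul, hπsum, one_mul]
    linarith
  have := le_mx w i
  have := mn_le w i
  rw [abs_le]
  constructor <;> linarith

end Dobrushin

section Decay

variable [Nonempty X]

theorem decay (D : Matrix X X ℝ) (hoff : ∀ i j, i ≠ j → 0 ≤ D i j)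
    (hrow : ∀ i, ∑ j, D i j = 0) (hirr : ∀ i j, 0 < exp D i j)
    (π : X → ℝ) (hπnn : ∀ i, 0 ≤ π i) (hπsum : ∑ i, π i = 1)
    (hπinv : ∀ j, ∑ i, π i * D i j = 0) (C : X → ℝ) (hC : ∑ j, π j * C j = 0) :
    ∃ K ρ : ℝ, 0 ≤ K ∧ (1:ℝ)/2 ≤ ρ ∧ ρ < 1 ∧
      ∀ t : ℝ, 0 ≤ t → ∀ i, |(exp (t • D) *ᵥ C) i| ≤ K * ρ ^ t := by
  classical
  have hrow1 : ∀ i, ∑ j, exp D i j = 1 := by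
    intro i
    have := exp_rowsum D hrow 1 i
    simpa using this
  -- δ : minimum entry of exp D
  obtain ⟨p0, _, hp0⟩ := Finset.exists_mem_eq_inf' (Finset.univ_nonempty (α := X × X))
    (fun p : X × X => exp D p.1 p.2)
  set δ : ℝ := Finset.univ.inf' Finset.univ_nonempty (fun p : X × X => exp D p.1 p.2) with hδdef
  have hδpos : 0 < δ := by rw [hp0]; exact hirr _ _
  have hδle : ∀ i j, δ ≤ exp D i j := fun i j =>
    Finset.inf'_le (fun p : X × X => exp D p.1 p.2) (mem_univ (i, j))
  set n : ℕ := Fintype.card X with hn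
  set ρ₀ : ℝ := 1 - (n : ℝ) * δ with hρ₀
  have hρ₀nn : 0 ≤ ρ₀ := by
    have i0 : X := Classical.arbitrary X
    have : (n : ℝ) * δ = ∑ _j : X, δ := by
      simp [hn, Finset.card_univ, mul_comm]
    have hle : (n : ℝ) * δ ≤ 1 := by
      rw [this, ← hrow1 i0]
      exact Finset.sum_le_sum fun j _ => hδle i0 j
    simp [hρ₀]; linarith
  have hρ₀lt : ρ₀ < 1 := by
    have hnpos : 0 < (n : ℝ) := by
      have : 0 < n := Fintype.card_pos
      exact_mod_cast this
    have : 0 < (n : ℝ) * δ := mul_pos hnpos hδpos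
    simp [hρ₀]; linarith
  set ρ : ℝ := max ρ₀ (1/2) with hρ
  have hρhalf : (1:ℝ)/2 ≤ ρ := le_max_right _ _
  have hρpos : 0 < ρ := lt_of_lt_of_le (by norm_num) hρhalf
  have hρlt1 : ρ < 1 := max_lt hρ₀lt (by norm_num)
  have hρ₀leρ : ρ₀ ≤ ρ := le_max_left _ _
  -- bound on entries of C
  set KC : ℝ := mx (fun j => |C j|) with hKC
  have hKCnn : 0 ≤ KC := by
    have i0 : X := Classical.arbitrary X
    rw [hKC]
    exact le_trans (abs_nonneg (C i0)) (le_mx (fun j => |C j|) i0)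
  refine ⟨4 * KC, ρ, by linarith, hρhalf, hρlt1, ?_⟩
  intro t ht i
  set v : ℝ → X → ℝ := fun u => exp (u • D) *ᵥ C with hv
  -- basic bounds
  have hbound : ∀ u : ℝ, 0 ≤ u → ∀ i', |v u i'| ≤ KC := by
    intro u hu i'
    have h1 : |v u i'| ≤ ∑ j, exp (u • D) i' j * |C j| := by
      rw [hv]
      simp only [Matrix.mulVec, dotProduct]
      refine le_trans (Finset.abs_sum_le_sum_abs _ _) (Finset.sum_le_sum fun j _ => ?_)
      rw [abs_mul, abs_of_nonneg (exp_smul_entry_nonneg D hoff hu i' j)]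
    have h2 : ∑ j, exp (u • D) i' j * |C j| ≤ ∑ j, exp (u • D) i' j * KC := by
      refine Finset.sum_le_sum fun j _ => ?_
      exact mul_le_mul_of_nonneg_left (le_mx (fun j => |C j|) j)
        (exp_smul_entry_nonneg D hoff hu i' j)
    have h3 : ∑ j, exp (u • D) i' j * KC = KC := by
      rw [← Finset.sum_mul, exp_rowsum D hrow u i', one_mul]
    linarith
  have hosc2 : ∀ u : ℝ, 0 ≤ u → mx (v u) - mn (v u) ≤ 2 * KC := by
    intro u hu
    obtain ⟨a, ha⟩ := exists_mx (v u)
    obtain ⟨b, hb⟩ := exists_mn (v u)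
    have h1 := hbound u hu a
    have h2 := hbound u hu b
    rw [ha, hb]
    rw [abs_le] at h1 h2
    linarith [h1.2, h2.1]
  have hcentered : ∀ u : ℝ, ∑ j, π j * v u j = 0 := by
    intro u
    rw [hv]
    simp only [Matrix.mulVec, dotProduct, Finset.mul_sum]
    rw [Finset.sum_comm]
    have : ∀ k, ∑ j, π j * (exp (u • D) j k * C k)
        = (∑ j, π j * exp (u • D) j k) * C k := by
      intro k
      rw [Finset.sum_mul]
      exact Finset.sum_congr rfl fun j _ => (mul_assoc _ _ _).symm
    calc ∑ k, ∑ j, π j * (exp (u • D) j k * C k)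
        = ∑ k, π k * C k := by
          refine Finset.sum_congr rfl fun k _ => ?_
          rw [this k, exp_pi D π hπinv u k]
      _ = 0 := hC
  -- iterate contraction
  have hiter : ∀ (m : ℕ) (s : ℝ), 0 ≤ s →
      mx (v (m + s)) - mn (v (m + s)) ≤ ρ₀ ^ m * (mx (v s) - mn (v s)) := by
    intro m
    induction m with
    | zero => intro s hs; simp
    | succ m ih =>
      intro s hs
      have hsplit : (((m : ℝ) + 1) + s) • D = D + ((m : ℝ) + s) • D := by
        module
      have hvstep : v (((m : ℕ) + 1 : ℕ) + s) = exp D *ᵥ v ((m : ℝ) + s) := by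
        rw [hv]
        push_cast
        rw [hsplit, Matrix.exp_add_of_commute _ _ ((Commute.refl D).smul_right _),
          ← Matrix.mulVec_mulVec]
      have h1 : mx (exp D *ᵥ v ((m : ℝ) + s)) - mn (exp D *ᵥ v ((m : ℝ) + s))
          ≤ ρ₀ * (mx (v ((m : ℝ) + s)) - mn (v ((m : ℝ) + s))) := by
        have := contract (exp D) δ hδle hrow1 (v ((m : ℝ) + s))
        simpa [hρ₀, hn] using this
      have h2 := ih s hs
      calc mx (v (((m : ℕ) + 1 : ℕ) + s)) - mn (v (((m : ℕ) + 1 : ℕ) + s))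
          = mx (exp D *ᵥ v ((m : ℝ) + s)) - mn (exp D *ᵥ v ((m : ℝ) + s)) := by
            rw [hvstep]
        _ ≤ ρ₀ * (mx (v ((m : ℝ) + s)) - mn (v ((m : ℝ) + s))) := h1
        _ ≤ ρ₀ * (ρ₀ ^ m * (mx (v s) - mn (v s))) :=
            mul_le_mul_of_nonneg_left h2 hρ₀nn
        _ = ρ₀ ^ (m + 1) * (mx (v s) - mn (v s)) := by ring
  -- assemble
  set m : ℕ := ⌊t⌋₊ with hm
  set s : ℝ := t - m with hs
  have hs0 : 0 ≤ s := by
    rw [hs]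
    have := Nat.floor_le ht
    linarith
  have hts : (m : ℝ) + s = t := by rw [hs]; ring
  have h1 : |v t i| ≤ mx (v t) - mn (v t) :=
    abs_le_osc π hπnn hπsum (v t) (hcentered t) i
  have h2 : mx (v t) - mn (v t) ≤ ρ₀ ^ m * (mx (v s) - mn (v s)) := by
    rw [← hts]
    exact hiter m s hs0
  have h3 : ρ₀ ^ m * (mx (v s) - mn (v s)) ≤ ρ₀ ^ m * (2 * KC) :=
    mul_le_mul_of_nonneg_left (hosc2 s hs0) (pow_nonneg hρ₀nn m)
  have h4 : ρ₀ ^ m ≤ ρ ^ m := pow_le_pow_left₀ hρ₀nn hρ₀leρ m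
  have h5 : (ρ : ℝ) ^ m ≤ 2 * ρ ^ t := by
    have hmt : t - 1 ≤ (m : ℝ) := (Nat.sub_one_lt_floor t).le
    have e1 : (ρ : ℝ) ^ m = ρ ^ ((m : ℕ) : ℝ) := (Real.rpow_natCast ρ m).symm
    have e2 : ρ ^ ((m : ℕ) : ℝ) ≤ ρ ^ (t - 1) :=
      Real.rpow_le_rpow_of_exponent_ge hρpos hρlt1.le hmt
    have e3 : ρ ^ (t - 1) = ρ ^ t / ρ := by
      rw [Real.rpow_sub hρpos, Real.rpow_one]
    have e4 : ρ ^ t / ρ ≤ 2 * ρ ^ t := by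
      rw [div_le_iff₀ hρpos]
      have h6 : 0 ≤ ρ ^ t := (Real.rpow_pos_of_pos hρpos t).le
      nlinarith
    rw [e1]; linarith
  have h7 : 0 ≤ ρ₀ ^ m := pow_nonneg hρ₀nn m
  have h8 : 0 ≤ (2 : ℝ) * KC := by linarith
  calc |v t i| ≤ ρ₀ ^ m * (2 * KC) := by linarith
    _ ≤ ρ ^ m * (2 * KC) := mul_le_mul_of_nonneg_right h4 h8
    _ ≤ (2 * ρ ^ t) * (2 * KC) := mul_le_mul_of_nonneg_right h5 h8
    _ = (4 * KC) * ρ ^ t := by ring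

end Decay

section Eigen

theorem hexp_map (D : Matrix X X ℝ) (s : ℝ) :
    exp (s • D.map Complex.ofReal) = (exp (s • D)).map Complex.ofReal := by
  letI : SeminormedRing (Matrix X X ℝ) := Matrix.linftyOpSemiNormedRing
  letI : NormedRing (Matrix X X ℝ) := Matrix.linftyOpNormedRing
  letI : NormedAlgebra ℝ (Matrix X X ℝ) := Matrix.linftyOpNormedAlgebra
  letI : SeminormedRing (Matrix X X ℂ) := Matrix.linftyOpSemiNormedRing
  letI : NormedRing (Matrix X X ℂ) := Matrix.linftyOpNormedRing
  letI : NormedAlgebra ℝ (Matrix X X ℂ) := Matrix.linftyOpNormedAlgebra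
  letI : NormedAlgebra ℚ (Matrix X X ℝ) := Matrix.linftyOpNormedAlgebra
  have hmap : ∀ A : Matrix X X ℝ, Complex.ofRealHom.mapMatrix A = A.map Complex.ofReal :=
    fun A => rfl
  have hlin : Continuous (Complex.ofRealHom.mapMatrix : Matrix X X ℝ →+* Matrix X X ℂ) := by
    have : Continuous fun A : Matrix X X ℝ => A.map Complex.ofReal :=
      LinearMap.continuous_of_finiteDimensional
        (f := { toFun := fun A : Matrix X X ℝ => A.map Complex.ofReal
                map_add' := fun A B => by
                  ext i j; simp [Matrix.map_apply]
                map_smul' := fun (r : ℝ) (A : Matrix X X ℝ) => by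
                  ext i j; simp [Matrix.map_apply, Matrix.smul_apply, Complex.real_smul] })
    exact this
  have h1 : (s • D).map Complex.ofReal = s • D.map Complex.ofReal := by
    ext i j
    simp [Matrix.map_apply, Complex.real_smul]
  rw [← h1, ← hmap (exp (s • D))]
  erw [map_exp Complex.ofRealHom.mapMatrix hlin]
  rw [hmap]
  rfl

theorem eigen_exp (M : Matrix X X ℂ) (v : X → ℂ) (μ : ℂ) (hv : M *ᵥ v = μ • v) (t : ℝ) :
    exp (t • M) *ᵥ v = Complex.exp ((t : ℂ) * μ) • v := by
  funext i
  rw [exp_mulVec_apply]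
  have hpowM : ∀ n : ℕ, M ^ n *ᵥ v = μ ^ n • v := by
    intro n
    induction n with
    | zero => simp
    | succ m ih =>
      rw [pow_succ, ← Matrix.mulVec_mulVec, hv, Matrix.mulVec_smul, ih, smul_smul]
      rw [pow_succ]
      ring_nf
  have hpow : ∀ n : ℕ, ((t • M) ^ n *ᵥ v) i = (((t : ℂ) * μ) ^ n) * v i := by
    intro n
    rw [smul_pow]
    have : (t ^ n • M ^ n) *ᵥ v = t ^ n • (M ^ n *ᵥ v) :=
      Matrix.smul_mulVec _ _ _
    rw [this, hpowM n]
    simp [Pi.smul_apply, smul_smul, Complex.real_smul, mul_pow]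
    ring
  have hterm : ∀ n : ℕ, (n.factorial : ℝ)⁻¹ • (((t • M) ^ n) *ᵥ v) i
      = (((t : ℂ) * μ) ^ n / (n.factorial : ℂ)) * v i := by
    intro n
    rw [hpow n, Complex.real_smul]
    push_cast
    ring
  rw [tsum_congr hterm, tsum_mul_right]
  have : ∑' (n : ℕ), ((t : ℂ) * μ) ^ n / (n.factorial : ℂ) = Complex.exp ((t : ℂ) * μ) := by
    rw [Complex.exp_eq_exp_ℂ, exp_eq_tsum_div]
  rw [this]
  simp

theorem no_neg_one_eigen [Nonempty X] (Q : Matrix X X ℝ) (hQpos : ∀ i j, 0 < Q i j)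
    (hQrow : ∀ i, ∑ j, Q i j = 1) (x : X → ℝ) (hx : Q *ᵥ x = -x) : x = 0 := by
  by_contra hx0
  obtain ⟨a, ha⟩ := exists_mx x
  obtain ⟨b, hb⟩ := exists_mx (fun i => -x i)
  set M1 : ℝ := mx x with hM1
  set M2 : ℝ := mx (fun i => -x i) with hM2
  have hQx : ∀ i, (Q *ᵥ x) i = -x i := fun i => congrFun hx i
  have hba : -x b = M2 := hb.symm
  have keya : x a = ∑ j, Q a j * (-x j) := by
    have h0 := hQx a
    have e2 : ∑ j, Q a j * (-x j) = -((Q *ᵥ x) a) := by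
      simp [Matrix.mulVec, dotProduct, mul_neg]
    rw [e2, h0, neg_neg]
  have keyb : -x b = ∑ j, Q b j * x j := by
    rw [← hQx b]
    simp [Matrix.mulVec, dotProduct]
  have hrowsum : ∀ i, ∑ j, Q i j * M2 = M2 := fun i => by
    rw [← Finset.sum_mul, hQrow, one_mul]
  have hrowsum1 : ∀ i, ∑ j, Q i j * M1 = M1 := fun i => by
    rw [← Finset.sum_mul, hQrow, one_mul]
  have hle2 : ∀ j ∈ univ, Q a j * (-x j) ≤ Q a j * M2 := fun j _ =>
    mul_le_mul_of_nonneg_left (le_mx (fun i => -x i) j) (hQpos a j).le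
  have h1 : M1 ≤ M2 := by
    calc M1 = x a := ha
      _ = ∑ j, Q a j * (-x j) := keya
      _ ≤ ∑ j, Q a j * M2 := Finset.sum_le_sum hle2
      _ = M2 := hrowsum a
  have h2 : M2 ≤ M1 := by
    calc M2 = -x b := hba.symm
      _ = ∑ j, Q b j * x j := keyb
      _ ≤ ∑ j, Q b j * M1 := Finset.sum_le_sum fun j _ =>
          mul_le_mul_of_nonneg_left (le_mx x j) (hQpos b j).le
      _ = M1 := hrowsum1 b
  have hm : M1 = M2 := le_antisymm h1 h2
  have hmpos : 0 < M1 := by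
    have hex : ∃ i, x i ≠ 0 := by
      by_contra h
      push_neg at h
      exact hx0 (funext h)
    obtain ⟨i, hi⟩ := hex
    rcases lt_or_gt_of_ne hi with h | h
    · have h3 : 0 < -x i := by linarith
      have h4 : -x i ≤ M2 := le_mx (fun i => -x i) i
      rw [hm]
      linarith
    · exact lt_of_lt_of_le h (le_mx x i)
  have heqsum : ∑ j, Q a j * (-x j) = ∑ j, Q a j * M2 := by
    rw [← keya, hrowsum a, ← hm]
    exact ha.symm
  have hall := (Finset.sum_eq_sum_iff_of_le hle2).1 heqsum
  have haa : Q a a * (-x a) = Q a a * M2 := hall a (mem_univ a)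
  have hxa : -x a = M2 := mul_left_cancel₀ (hQpos a a).ne' haa
  have : x a = M1 := ha.symm
  rw [hm] at this
  linarith [hm ▸ hmpos]

end Eigen


section Deriv

theorem entry_hasDerivAt (N W : Matrix X X ℂ) (i j : X) (t : ℝ) :
    HasDerivAt (fun u : ℝ => (W * exp (u • N)) i j) ((W * (N * exp (t • N))) i j) t := by
  letI : SeminormedRing (Matrix X X ℂ) := Matrix.linftyOpSemiNormedRing
  letI : NormedRing (Matrix X X ℂ) := Matrix.linftyOpNormedRing
  letI : NormedAlgebra ℝ (Matrix X X ℂ) := Matrix.linftyOpNormedAlgebra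
  have h := hasDerivAt_exp_smul_const' (𝕂 := ℝ) N t
  let L : Matrix X X ℂ →ₗ[ℝ] ℂ :=
    { toFun := fun A : Matrix X X ℂ => (W * A) i j
      map_add' := fun A B => by simp [Matrix.mul_add, Matrix.add_apply]
      map_smul' := fun (r : ℝ) (A : Matrix X X ℂ) => by
        simp [Matrix.mul_smul, Matrix.smul_apply] }
  have hL : Continuous L := L.continuous_of_finiteDimensional
  have h2 := (ContinuousLinearMap.hasFDerivAt
    (⟨L, hL⟩ : Matrix X X ℂ →L[ℝ] ℂ)).comp_hasDerivAt t h
  exact h2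

theorem exp_entry_continuous (D : Matrix X X ℝ) (i j : X) :
    Continuous fun t : ℝ => exp (t • D) i j := by
  letI : SeminormedRing (Matrix X X ℝ) := Matrix.linftyOpSemiNormedRing
  letI : NormedRing (Matrix X X ℝ) := Matrix.linftyOpNormedRing
  letI : NormedAlgebra ℝ (Matrix X X ℝ) := Matrix.linftyOpNormedAlgebra
  letI : NormedAlgebra ℚ (Matrix X X ℝ) := Matrix.linftyOpNormedAlgebra
  have h1 : Continuous fun t : ℝ => t • D := continuous_id.smul continuous_const
  have h2 : Continuous (exp : Matrix X X ℝ → Matrix X X ℝ) := exp_continuous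
  exact (continuous_apply j).comp ((continuous_apply i).comp (h2.comp h1))

end Deriv

section IsUnitSec

theorem isUnit_freq [Nonempty X] (D : Matrix X X ℝ) (hoff : ∀ i j, i ≠ j → 0 ≤ D i j)
    (hrow : ∀ i, ∑ j, D i j = 0) (hirr : ∀ i j, 0 < exp D i j)
    (ω : ℝ) (hω : ω ≠ 0) :
    IsUnit ((Complex.I * ω) • (1 : Matrix X X ℂ) - D.map Complex.ofReal) := by
  rw [Matrix.isUnit_iff_isUnit_det, isUnit_iff_ne_zero]
  intro hdet
  obtain ⟨v, hv0, hv⟩ := Matrix.exists_mulVec_eq_zero_iff.2 hdet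
  have heig : (D.map Complex.ofReal) *ᵥ v = (Complex.I * ω) • v := by
    have h1 : ((Complex.I * ω) • (1 : Matrix X X ℂ)) *ᵥ v - (D.map Complex.ofReal) *ᵥ v = 0 := by
      rw [← Matrix.sub_mulVec]; exact hv
    have h2 : ((Complex.I * ω) • (1 : Matrix X X ℂ)) *ᵥ v = (Complex.I * ω) • v := by
      rw [Matrix.smul_mulVec, Matrix.one_mulVec]
    rw [h2, sub_eq_zero] at h1
    exact h1.symm
  have hωabs : 0 < |ω| := abs_pos.2 hω
  set k : ℕ := ⌈|ω|⌉₊ with hk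
  set T : ℝ := (2 * (k : ℝ) + 1) * Real.pi / |ω| with hT
  have hkω : |ω| ≤ (k : ℝ) := Nat.le_ceil _
  have hT1 : 1 ≤ T := by
    rw [hT, le_div_iff₀ hωabs, one_mul]
    nlinarith [Real.pi_gt_three]
  set ε : ℤ := if 0 < ω then (2 * (k : ℤ) + 1) else -(2 * (k : ℤ) + 1) with hε
  have hωT : ω * T = (ε : ℝ) * Real.pi := by
    rcases hω.lt_or_gt with h | h
    · have habs : |ω| = -ω := abs_of_neg h
      have hε' : (ε : ℝ) = -(2 * (k : ℝ) + 1) := by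
        rw [hε, if_neg h.not_gt]
        push_cast; ring
      rw [hT, habs, hε']
      field_simp [hω]
    · have habs : |ω| = ω := abs_of_pos h
      have hε' : (ε : ℝ) = 2 * (k : ℝ) + 1 := by
        rw [hε, if_pos h]
        push_cast; ring
      rw [hT, habs, hε']
      field_simp [hω]
  have hodd : Odd ε := by
    rw [hε]
    split_ifs with h
    · exact odd_two_mul_add_one _
    · exact (odd_two_mul_add_one _).neg
  have hexpT : Complex.exp ((T : ℂ) * (Complex.I * ω)) = -1 := by
    have harg : (T : ℂ) * (Complex.I * ω) = (ε : ℂ) * ((Real.pi : ℂ) * Complex.I) := by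
      have h1 : (T : ℂ) * (Complex.I * (ω : ℂ)) = ((ω * T : ℝ) : ℂ) * Complex.I := by
        push_cast; ring
      rw [h1, hωT]
      push_cast; ring
    rw [harg, Complex.exp_int_mul, Complex.exp_pi_mul_I]
    exact hodd.neg_one_zpow
  have hQv : (exp (T • D)).map Complex.ofReal *ᵥ v = -v := by
    calc (exp (T • D)).map Complex.ofReal *ᵥ v
        = exp (T • D.map Complex.ofReal) *ᵥ v := by rw [hexp_map]
      _ = Complex.exp ((T : ℂ) * (Complex.I * ω)) • v := eigen_exp _ v _ heig T
      _ = -v := by rw [hexpT, neg_one_smul]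
  have hQpos : ∀ i j, 0 < exp (T • D) i j :=
    fun i j => exp_smul_entry_pos D hoff hrow hirr hT1 i j
  have hQrow : ∀ i, ∑ j, exp (T • D) i j = 1 := fun i => exp_rowsum D hrow T i
  have hre : exp (T • D) *ᵥ (fun i => (v i).re) = -(fun i => (v i).re) := by
    funext i
    have h1 := congrFun hQv i
    have h2 : ((exp (T • D)).map Complex.ofReal *ᵥ v) i
        = ∑ j, (exp (T • D) i j : ℂ) * v j := by
      simp [Matrix.mulVec, dotProduct, Matrix.map_apply]
    rw [h2] at h1
    have h3 : (∑ j, (exp (T • D) i j : ℂ) * v j).re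
        = ∑ j, exp (T • D) i j * (v j).re := by
      rw [Complex.re_sum]
      exact Finset.sum_congr rfl fun j _ => by
        simp [Complex.mul_re]
    show ∑ j, exp (T • D) i j * (v j).re = -(v i).re
    rw [← h3, h1]
    simp
  have him : exp (T • D) *ᵥ (fun i => (v i).im) = -(fun i => (v i).im) := by
    funext i
    have h1 := congrFun hQv i
    have h2 : ((exp (T • D)).map Complex.ofReal *ᵥ v) i
        = ∑ j, (exp (T • D) i j : ℂ) * v j := by
      simp [Matrix.mulVec, dotProduct, Matrix.map_apply]
    rw [h2] at h1
    have h3 : (∑ j, (exp (T • D) i j : ℂ) * v j).im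
        = ∑ j, exp (T • D) i j * (v j).im := by
      rw [Complex.im_sum]
      exact Finset.sum_congr rfl fun j _ => by
        simp [Complex.mul_im]
    show ∑ j, exp (T • D) i j * (v j).im = -(v i).im
    rw [← h3, h1]
    simp
  have hxre := no_neg_one_eigen (exp (T • D)) hQpos hQrow _ hre
  have hyim := no_neg_one_eigen (exp (T • D)) hQpos hQrow _ him
  apply hv0
  funext i
  have h1 : (v i).re = 0 := congrFun hxre i
  have h2 : (v i).im = 0 := congrFun hyim i
  show v i = 0
  exact Complex.ext (by simpa using h1) (by simpa using h2)

end IsUnitSec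

end Stmt12Aux

open Stmt12Aux

/-- Frequency-response formula: for an irreducible generator `D` with invariant probability
vector `π` and a centered output vector `C` (`Σ π(j)C(j) = 0`), for each `ω ≠ 0` the matrix
`iωI − D` is invertible and `Bᵀ(iωI − D)⁻¹C = ∫₀^∞ e^{−iωt} Bᵀ exp(tD) C dt`. -/
theorem stmt_12 {X : Type*} [Fintype X] [DecidableEq X]
    (D : Matrix X X ℝ)
    (hoff : ∀ i j, i ≠ j → 0 ≤ D i j) (hrow : ∀ i, ∑ j, D i j = 0)
    (hirr : ∀ i j, 0 < NormedSpace.exp D i j)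
    (π : X → ℝ) (hπnn : ∀ i, 0 ≤ π i) (hπsum : ∑ i, π i = 1)
    (hπinv : ∀ j, ∑ i, π i * D i j = 0)
    (B C : X → ℝ) (hC : ∑ j, π j * C j = 0)
    (ω : ℝ) (hω : ω ≠ 0) :
    IsUnit ((Complex.I * ω) • (1 : Matrix X X ℂ) - D.map (Complex.ofReal)) ∧
    MeasureTheory.IntegrableOn
      (fun t : ℝ => Complex.exp (-(Complex.I * ω * t)) *
        ((∑ i, ∑ j, B i * (NormedSpace.exp (t • D)) i j * C j : ℝ) : ℂ))
      (Set.Ioi 0) ∧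
    (∑ i, ∑ j, (B i : ℂ) *
        ((Complex.I * ω) • (1 : Matrix X X ℂ) - D.map (Complex.ofReal))⁻¹ i j * (C j : ℂ))
      = ∫ t in Set.Ioi (0 : ℝ), Complex.exp (-(Complex.I * ω * t)) *
          ((∑ i, ∑ j, B i * (NormedSpace.exp (t • D)) i j * C j : ℝ) : ℂ) := by
  have hNE : Nonempty X := by
    rcases isEmpty_or_nonempty X with hE | hNE
    · exfalso
      rw [Finset.univ_eq_empty, Finset.sum_empty] at hπsum
      norm_num at hπsum
    · exact hNE
  classical
  -- invertibility
  have hAunit : IsUnit ((Complex.I * ω) • (1 : Matrix X X ℂ) - D.map Complex.ofReal) :=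
    isUnit_freq D hoff hrow hirr ω hω
  -- decay estimates
  obtain ⟨K, ρ, hK, hρhalf, hρ1, hdec⟩ :=
    decay D hoff hrow hirr π hπnn hπsum hπinv C hC
  have hρpos : (0 : ℝ) < ρ := by linarith
  have hnorm : ∀ t : ℝ, ‖Complex.exp (-(Complex.I * ω * t))‖ = 1 := by
    intro t
    rw [Complex.norm_exp]
    have h0 : (-(Complex.I * ω * t)).re = 0 := by simp
    rw [h0, Real.exp_zero]
  have hFle : ∀ t : ℝ, 0 ≤ t →
      |∑ i, ∑ j, B i * NormedSpace.exp (t • D) i j * C j|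
        ≤ (∑ i, |B i|) * (K * ρ ^ t) := by
    intro t ht
    have hrw : ∀ i, ∑ j, B i * NormedSpace.exp (t • D) i j * C j
        = B i * (NormedSpace.exp (t • D) *ᵥ C) i := by
      intro i
      simp [Matrix.mulVec, dotProduct, Finset.mul_sum, mul_assoc]
    calc |∑ i, ∑ j, B i * NormedSpace.exp (t • D) i j * C j|
        = |∑ i, B i * (NormedSpace.exp (t • D) *ᵥ C) i| := by
          rw [Finset.sum_congr rfl fun i _ => hrw i]
      _ ≤ ∑ i, |B i * (NormedSpace.exp (t • D) *ᵥ C) i| :=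
          Finset.abs_sum_le_sum_abs _ _
      _ ≤ ∑ i, |B i| * (K * ρ ^ t) := Finset.sum_le_sum fun i _ => by
          rw [abs_mul]
          exact mul_le_mul_of_nonneg_left (hdec t ht i) (abs_nonneg _)
      _ = (∑ i, |B i|) * (K * ρ ^ t) := by rw [← Finset.sum_mul]
  have hcont : Continuous (fun t : ℝ => Complex.exp (-(Complex.I * ω * t)) *
      ((∑ i, ∑ j, B i * NormedSpace.exp (t • D) i j * C j : ℝ) : ℂ)) := by
    have h1 : Continuous fun t : ℝ => (∑ i, ∑ j, B i * NormedSpace.exp (t • D) i j * C j : ℝ) :=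
      continuous_finset_sum _ fun i _ => continuous_finset_sum _ fun j _ =>
        (continuous_const.mul (exp_entry_continuous D i j)).mul continuous_const
    have h2 : Continuous fun t : ℝ => Complex.exp (-(Complex.I * ω * t)) :=
      Complex.continuous_exp.comp ((continuous_const.mul Complex.continuous_ofReal).neg)
    exact h2.mul (Complex.continuous_ofReal.comp h1)
  have hlogneg : Real.log ρ < 0 := Real.log_neg hρpos hρ1
  have hmaj : MeasureTheory.IntegrableOn
      (fun t : ℝ => ((∑ i, |B i|) * K) * Real.exp (-(-Real.log ρ) * t)) (Set.Ioi 0) :=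
    (exp_neg_integrableOn_Ioi 0 (by linarith)).const_mul _
  have hρrw : ∀ t : ℝ, ρ ^ t = Real.exp (-(-Real.log ρ) * t) := by
    intro t
    rw [neg_neg, Real.rpow_def_of_pos hρpos]
  have hInt : MeasureTheory.IntegrableOn
      (fun t : ℝ => Complex.exp (-(Complex.I * ω * t)) *
        ((∑ i, ∑ j, B i * NormedSpace.exp (t • D) i j * C j : ℝ) : ℂ))
      (Set.Ioi 0) := by
    refine MeasureTheory.Integrable.mono' hmaj hcont.aestronglyMeasurable.restrict ?_
    refine (MeasureTheory.ae_restrict_iff' measurableSet_Ioi).2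
      (Filter.Eventually.of_forall fun t ht => ?_)
    have ht' : (0 : ℝ) ≤ t := (le_of_lt ht)
    rw [norm_mul, hnorm t, one_mul, Complex.norm_real, Real.norm_eq_abs]
    calc |∑ i, ∑ j, B i * NormedSpace.exp (t • D) i j * C j|
        ≤ (∑ i, |B i|) * (K * ρ ^ t) := hFle t ht'
      _ = ((∑ i, |B i|) * K) * Real.exp (-(-Real.log ρ) * t) := by
          rw [← hρrw t]; ring
  refine ⟨hAunit, hInt, ?_⟩
  -- the resolvent identity
  set A : Matrix X X ℂ := (Complex.I * ω) • (1 : Matrix X X ℂ) - D.map Complex.ofReal with hA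
  set N : Matrix X X ℂ := D.map Complex.ofReal - (Complex.I * ω) • (1 : Matrix X X ℂ) with hN
  have hNA : N = -A := by rw [hN, hA, neg_sub]
  have hAdet : IsUnit A.det := (Matrix.isUnit_iff_isUnit_det A).1 hAunit
  have hAinvA : A⁻¹ * A = 1 := Matrix.nonsing_inv_mul A hAdet
  have hsplit : ∀ t : ℝ, exp (t • N)
      = Complex.exp (-(Complex.I * ω * t)) • ((exp (t • D)).map Complex.ofReal) := by
    intro t
    have h1 : t • N = t • (D.map Complex.ofReal)
        + (-(Complex.I * ω * t)) • (1 : Matrix X X ℂ) := by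
      rw [hN]
      ext i j
      simp only [Matrix.smul_apply, Matrix.sub_apply, Matrix.add_apply, Matrix.one_apply,
        Matrix.map_apply, smul_eq_mul, Complex.real_smul, mul_ite, mul_one, mul_zero]
      split_ifs <;> push_cast <;> ring
    rw [h1, Matrix.exp_add_of_commute _ _ ((Commute.one_right _).smul_right _),
      exp_smul_one_complex, Matrix.mul_smul, mul_one, hexp_map]
  have hψ : ∀ t : ℝ, (∑ i, ∑ j, (B i : ℂ) * (exp (t • N)) i j * (C j : ℂ))
      = Complex.exp (-(Complex.I * ω * t)) *
        ((∑ i, ∑ j, B i * NormedSpace.exp (t • D) i j * C j : ℝ) : ℂ) := by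
    intro t
    rw [hsplit t]
    push_cast
    rw [Finset.mul_sum]
    refine Finset.sum_congr rfl fun i _ => ?_
    rw [Finset.mul_sum]
    refine Finset.sum_congr rfl fun j _ => ?_
    simp only [Matrix.smul_apply, Matrix.map_apply, smul_eq_mul]
    ring
  have hgderiv : ∀ t : ℝ,
      HasDerivAt (fun u : ℝ => -(∑ i, ∑ j, (B i : ℂ) * (A⁻¹ * exp (u • N)) i j * (C j : ℂ)))
        (Complex.exp (-(Complex.I * ω * t)) *
          ((∑ i, ∑ j, B i * NormedSpace.exp (t • D) i j * C j : ℝ) : ℂ)) t := by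
    intro t
    have hd : HasDerivAt (fun u : ℝ => ∑ i, ∑ j, (B i : ℂ) * (A⁻¹ * exp (u • N)) i j * (C j : ℂ))
        (∑ i, ∑ j, (B i : ℂ) * (A⁻¹ * (N * exp (t • N))) i j * (C j : ℂ)) t := by
      refine HasDerivAt.fun_sum fun i _ => ?_
      refine HasDerivAt.fun_sum fun j _ => ?_
      exact ((entry_hasDerivAt N A⁻¹ i j t).const_mul ((B i : ℂ))).mul_const _
    have hmatrix : A⁻¹ * (N * exp (t • N)) = -(exp (t • N)) := by
      rw [← mul_assoc, hNA, Matrix.mul_neg, hAinvA]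
      simp
    have hval : (∑ i, ∑ j, (B i : ℂ) * (A⁻¹ * (N * exp (t • N))) i j * (C j : ℂ))
        = -(Complex.exp (-(Complex.I * ω * t)) *
          ((∑ i, ∑ j, B i * NormedSpace.exp (t • D) i j * C j : ℝ) : ℂ)) := by
      rw [hmatrix, ← hψ t]
      simp [Matrix.neg_apply, mul_neg, neg_mul, Finset.sum_neg_distrib]
    have h2 := hd.fun_neg
    rw [hval] at h2
    simpa using h2
  have hg0 : (∑ i, ∑ j, (B i : ℂ) * (A⁻¹ * exp ((0:ℝ) • N)) i j * (C j : ℂ))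
      = ∑ i, ∑ j, (B i : ℂ) * A⁻¹ i j * (C j : ℂ) := by
    rw [zero_smul]
    rw [exp_zero, mul_one]
  have hgt : ∀ t : ℝ, (∑ i, ∑ j, (B i : ℂ) * (A⁻¹ * exp (t • N)) i j * (C j : ℂ))
      = Complex.exp (-(Complex.I * ω * t)) *
        ∑ k, (∑ i, (B i : ℂ) * A⁻¹ i k) * (((exp (t • D) *ᵥ C) k : ℝ) : ℂ) := by
    intro t
    calc (∑ i, ∑ j, (B i : ℂ) * (A⁻¹ * exp (t • N)) i j * (C j : ℂ))
        = ∑ i, ∑ j, (B i : ℂ) * (Complex.exp (-(Complex.I * ω * t)) *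
            ∑ k, A⁻¹ i k * ((exp (t • D) k j : ℝ) : ℂ)) * (C j : ℂ) := by
          refine Finset.sum_congr rfl fun i _ => Finset.sum_congr rfl fun j _ => ?_
          rw [hsplit t, Matrix.mul_smul]
          simp only [Matrix.smul_apply, Matrix.mul_apply, Matrix.map_apply, smul_eq_mul]
      _ = ∑ i, ∑ j, ∑ k, Complex.exp (-(Complex.I * ω * t)) *
            ((B i : ℂ) * A⁻¹ i k * ((exp (t • D) k j : ℝ) : ℂ) * (C j : ℂ)) := by
          refine Finset.sum_congr rfl fun i _ => Finset.sum_congr rfl fun j _ => ?_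
          rw [Finset.mul_sum, Finset.mul_sum, Finset.sum_mul]
          exact Finset.sum_congr rfl fun k _ => by ring
      _ = ∑ i, ∑ k, ∑ j, Complex.exp (-(Complex.I * ω * t)) *
            ((B i : ℂ) * A⁻¹ i k * ((exp (t • D) k j : ℝ) : ℂ) * (C j : ℂ)) := by
          exact Finset.sum_congr rfl fun i _ => Finset.sum_comm
      _ = ∑ k, ∑ i, ∑ j, Complex.exp (-(Complex.I * ω * t)) *
            ((B i : ℂ) * A⁻¹ i k * ((exp (t • D) k j : ℝ) : ℂ) * (C j : ℂ)) :=
          Finset.sum_comm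
      _ = Complex.exp (-(Complex.I * ω * t)) *
          ∑ k, (∑ i, (B i : ℂ) * A⁻¹ i k) * (((exp (t • D) *ᵥ C) k : ℝ) : ℂ) := by
          rw [Finset.mul_sum]
          refine Finset.sum_congr rfl fun k _ => ?_
          have hcast : (((exp (t • D) *ᵥ C) k : ℝ) : ℂ)
              = ∑ j, ((exp (t • D) k j : ℝ) : ℂ) * ((C j : ℝ) : ℂ) := by
            simp [Matrix.mulVec, dotProduct]
          rw [hcast, Finset.sum_mul_sum, Finset.mul_sum]
          refine Finset.sum_congr rfl fun i _ => ?_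
          rw [Finset.mul_sum]
          exact Finset.sum_congr rfl fun j _ => by ring
  have htend : Filter.Tendsto
      (fun u : ℝ => -(∑ i, ∑ j, (B i : ℂ) * (A⁻¹ * exp (u • N)) i j * (C j : ℂ)))
      Filter.atTop (nhds 0) := by
    set c2 : ℝ := (∑ k, ‖∑ i, (B i : ℂ) * A⁻¹ i k‖) * K with hc2
    have h0 : Filter.Tendsto (fun t : ℝ => c2 * ρ ^ t) Filter.atTop (nhds 0) := by
      have h := tendsto_rpow_atTop_of_base_lt_one ρ (by linarith) hρ1
      simpa using h.const_mul c2
    have h1 : Filter.Tendsto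
        (fun u : ℝ => ∑ i, ∑ j, (B i : ℂ) * (A⁻¹ * exp (u • N)) i j * (C j : ℂ))
        Filter.atTop (nhds 0) := by
      refine squeeze_zero_norm' ?_ h0
      filter_upwards [Filter.eventually_ge_atTop (0 : ℝ)] with t ht
      calc ‖∑ i, ∑ j, (B i : ℂ) * (A⁻¹ * exp (t • N)) i j * (C j : ℂ)‖
          = ‖∑ k, (∑ i, (B i : ℂ) * A⁻¹ i k) * (((exp (t • D) *ᵥ C) k : ℝ) : ℂ)‖ := by
            rw [hgt t, norm_mul, hnorm t, one_mul]
        _ ≤ ∑ k, ‖(∑ i, (B i : ℂ) * A⁻¹ i k) * (((exp (t • D) *ᵥ C) k : ℝ) : ℂ)‖ :=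
            norm_sum_le _ _
        _ ≤ ∑ k, ‖∑ i, (B i : ℂ) * A⁻¹ i k‖ * (K * ρ ^ t) := by
            refine Finset.sum_le_sum fun k _ => ?_
            rw [norm_mul, Complex.norm_real, Real.norm_eq_abs]
            exact mul_le_mul_of_nonneg_left (hdec t ht k) (norm_nonneg _)
        _ = c2 * ρ ^ t := by rw [← Finset.sum_mul, hc2]; ring
    simpa using h1.neg
  have hFTC := MeasureTheory.integral_Ioi_of_hasDerivAt_of_tendsto'
      (f := fun u : ℝ => -(∑ i, ∑ j, (B i : ℂ) * (A⁻¹ * exp (u • N)) i j * (C j : ℂ)))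
      (f' := fun t : ℝ => Complex.exp (-(Complex.I * ω * t)) *
        ((∑ i, ∑ j, B i * NormedSpace.exp (t • D) i j * C j : ℝ) : ℂ))
      (a := 0) (m := 0)
      (fun x _ => hgderiv x) hInt htend
  calc (∑ i, ∑ j, (B i : ℂ) * A⁻¹ i j * (C j : ℂ))
      = 0 - (-(∑ i, ∑ j, (B i : ℂ) * (A⁻¹ * exp ((0 : ℝ) • N)) i j * (C j : ℂ))) := by
        rw [hg0]; ring
    _ = _ := hFTC.symm
end

section
/- Let X be a finite set, let t ↦ D_t be a continuous map from [0,∞) to real matrices on X such that D_t is a generator matrix for every t, and let μ : [0,∞) → ℝ^X be differentiable with d/dt μ_t(j) = Σ_i μ_t(i) D_t(i,j) for all j and t ≥ 0. If μ_0 is a probability vector (nonnegative entries summing to 1), then μ_t is a probability vector for every t ≥ 0. -/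
open Set Finset Filter Topology

/-- Solutions of the mean-field state equation `d/dt μ_t = μ_t D_t`, for a continuous family
of generator matrices `D_t`, remain probability vectors for all `t ≥ 0` if `μ₀` is one. -/
theorem stmt_18 {X : Type*} [Fintype X] [DecidableEq X]
    (Dm : ℝ → Matrix X X ℝ)
    (hcont : ContinuousOn Dm (Set.Ici (0 : ℝ)))
    (hgen : ∀ t ∈ Set.Ici (0 : ℝ),
      (∀ i j, i ≠ j → 0 ≤ Dm t i j) ∧ (∀ i, ∑ j, Dm t i j = 0))
    (μ : ℝ → X → ℝ)
    (hode : ∀ t ∈ Set.Ici (0 : ℝ),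
      HasDerivWithinAt μ (fun j => ∑ i, μ t i * Dm t i j) (Set.Ici 0) t)
    (hμ0nn : ∀ j, 0 ≤ μ 0 j) (hμ0sum : ∑ j, μ 0 j = 1) :
    ∀ t ∈ Set.Ici (0 : ℝ), (∀ j, 0 ≤ μ t j) ∧ ∑ j, μ t j = 1 := by
  -- coordinate derivatives
  have hco : ∀ (j : X), ∀ s ∈ Set.Ici (0:ℝ),
      HasDerivWithinAt (fun u => μ u j) (∑ i, μ s i * Dm s i j) (Set.Ici 0) s := by
    intro j s hs
    exact (ContinuousLinearMap.proj j : (X → ℝ) →L[ℝ] ℝ).hasFDerivAt.comp_hasDerivWithinAt s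
      (hode s hs)
  have hcμ : ∀ (j : X), ContinuousOn (fun u => μ u j) (Set.Ici (0:ℝ)) := fun j s hs =>
    (hco j s hs).continuousWithinAt
  -- continuity of entries
  have hent : ∀ (i j : X), ContinuousOn (fun s => Dm s i j) (Set.Ici (0:ℝ)) := by
    intro i j
    exact ((continuous_apply j).comp (continuous_apply i)).comp_continuousOn hcont
  intro t ht
  have ht0 : (0:ℝ) ≤ t := ht
  constructor
  · -- nonnegativity
    intro j
    -- bound on D over Icc 0 t
    set h : ℝ → ℝ := fun s => ∑ k, ∑ i, |Dm s i k| with hh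
    have hhc : ContinuousOn h (Set.Icc 0 t) := by
      apply continuousOn_finset_sum
      intro k _
      apply continuousOn_finset_sum
      intro i _
      exact ((hent i k).mono Icc_subset_Ici_self).abs
    obtain ⟨s₀, hs₀, hs₀max⟩ := (isCompact_Icc).exists_isMaxOn ⟨0, left_mem_Icc.2 ht0⟩ hhc
    set C : ℝ := 1 + h s₀ with hC
    have hhnn : 0 ≤ h s₀ := Finset.sum_nonneg fun k _ => Finset.sum_nonneg fun i _ => abs_nonneg _
    have hC1 : (1:ℝ) ≤ C := by simp [hC]; linarith
    have hColbd : ∀ s ∈ Set.Icc (0:ℝ) t, ∀ k : X,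
        ∑ i ∈ Finset.univ.erase k, Dm s i k ≤ C - 1 := by
      intro s hs k
      have h1 : ∑ i ∈ Finset.univ.erase k, Dm s i k ≤ ∑ i, |Dm s i k| := by
        refine le_trans (Finset.sum_le_sum fun i _ => le_abs_self _) ?_
        exact Finset.sum_le_sum_of_subset_of_nonneg (Finset.erase_subset _ _)
          (fun i _ _ => abs_nonneg _)
      have h2 : ∑ i, |Dm s i k| ≤ h s :=
        Finset.single_le_sum (f := fun k => ∑ i, |Dm s i k|)
          (fun k _ => Finset.sum_nonneg fun i _ => abs_nonneg _) (Finset.mem_univ k)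
      have h3 : h s ≤ h s₀ := hs₀max hs
      simp only [hC]
      linarith
    -- the ε-barrier claim
    have key : ∀ ε : ℝ, 0 < ε → ∀ s ∈ Set.Icc (0:ℝ) t, ∀ k : X,
        0 < μ s k + ε * Real.exp (C * s) := by
      intro ε hε
      by_contra hcon
      push_neg at hcon
      set g : X → ℝ → ℝ := fun k s => μ s k + ε * Real.exp (C * s) with hg
      set A : Set ℝ := ⋃ k : X, (Set.Icc 0 t ∩ (g k) ⁻¹' Set.Iic 0) with hA
      have hgc : ∀ k : X, ContinuousOn (g k) (Set.Icc 0 t) := by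
        intro k
        exact ((hcμ k).mono Icc_subset_Ici_self).add
          (continuousOn_const.mul ((Real.continuous_exp.comp
            (continuous_const.mul continuous_id)).continuousOn))
      have hAclosed : IsClosed A := by
        refine isClosed_iUnion_of_finite fun k => ?_
        exact (hgc k).preimage_isClosed_of_isClosed isClosed_Icc isClosed_Iic
      have hAne : A.Nonempty := by
        obtain ⟨s, hs, k, hk⟩ := hcon
        exact ⟨s, Set.mem_iUnion.2 ⟨k, hs, by simpa using hk⟩⟩
      have hAbdd : BddBelow A := ⟨0, fun s hs => by
        obtain ⟨k, hk⟩ := Set.mem_iUnion.1 hs; exact hk.1.1⟩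
      set t₀ : ℝ := sInf A with ht₀
      have ht₀A : t₀ ∈ A := hAclosed.csInf_mem hAne hAbdd
      obtain ⟨j₀, hj₀⟩ := Set.mem_iUnion.1 ht₀A
      have ht₀Icc : t₀ ∈ Set.Icc (0:ℝ) t := hj₀.1
      have hgj₀ : g j₀ t₀ ≤ 0 := hj₀.2
      have ht₀pos : 0 < t₀ := by
        rcases lt_or_eq_of_le ht₀Icc.1 with h | h
        · exact h
        · exfalso
          have : g j₀ 0 ≤ 0 := by rw [← h] at hgj₀; exact hgj₀
          have h0 : 0 < g j₀ 0 := by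
            simp only [hg, mul_zero, Real.exp_zero, mul_one]
            have := hμ0nn j₀; linarith
          linarith
      -- before t₀, all coordinates positive
      have hbefore : ∀ s ∈ Set.Ico (0:ℝ) t₀, ∀ k : X, 0 < g k s := by
        intro s hs k
        by_contra hle
        push_neg at hle
        have hsA : s ∈ A := Set.mem_iUnion.2 ⟨k, ⟨⟨hs.1, hs.2.le.trans ht₀Icc.2⟩, hle⟩⟩
        exact absurd (csInf_le hAbdd hsA) (not_le.2 hs.2)
      -- at t₀, all coordinates nonneg by continuity from the left
      have hneBot : (𝓝[Set.Ico (0:ℝ) t₀] t₀).NeBot := by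
        rw [nhdsWithin_Ico_eq_nhdsLT ht₀pos]
        infer_instance
      have hat : ∀ k : X, 0 ≤ g k t₀ := by
        intro k
        have hc : ContinuousWithinAt (g k) (Set.Icc 0 t) t₀ := (hgc k) t₀ ht₀Icc
        have hsub : Set.Ico (0:ℝ) t₀ ⊆ Set.Icc 0 t := fun s hs =>
          ⟨hs.1, hs.2.le.trans ht₀Icc.2⟩
        have htend : Filter.Tendsto (g k) (𝓝[Set.Ico (0:ℝ) t₀] t₀) (𝓝 (g k t₀)) :=
          hc.tendsto.mono_left (nhdsWithin_mono _ hsub)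
        exact ge_of_tendsto htend (Filter.eventually_of_mem self_mem_nhdsWithin
          fun s hs => (hbefore s hs k).le)
      have hgj₀0 : g j₀ t₀ = 0 := le_antisymm hgj₀ (hat j₀)
      set c : ℝ := ε * Real.exp (C * t₀) with hc
      have hcpos : 0 < c := mul_pos hε (Real.exp_pos _)
      have hμj₀ : μ t₀ j₀ = -c := by
        have := hgj₀0; simp only [hg] at this; linarith
      have hμlb : ∀ i : X, -c ≤ μ t₀ i := by
        intro i
        have := hat i; simp only [hg] at this; linarith
      -- derivative of g j₀ at t₀
      have hd1 : HasDerivWithinAt (g j₀)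
          ((∑ i, μ t₀ i * Dm t₀ i j₀) + ε * (Real.exp (C * t₀) * C)) (Set.Ici 0) t₀ := by
        refine (hco j₀ t₀ ht₀Icc.1).add ?_
        have he : HasDerivAt (fun s => ε * Real.exp (C * s))
            (ε * (Real.exp (C * t₀) * C)) t₀ := by
          simpa using (((hasDerivAt_id t₀).const_mul C).exp.const_mul ε)
        exact he.hasDerivWithinAt
      -- the derivative is positive
      have hdpos : 0 < (∑ i, μ t₀ i * Dm t₀ i j₀) + ε * (Real.exp (C * t₀) * C) := by
        have hDrow := (hgen t₀ ht₀Icc.1).2 j₀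
        have hDoff := (hgen t₀ ht₀Icc.1).1
        have hDjj : Dm t₀ j₀ j₀ ≤ 0 := by
          have h1 : Dm t₀ j₀ j₀ + ∑ k ∈ Finset.univ.erase j₀, Dm t₀ j₀ k = 0 := by
            rw [Finset.add_sum_erase _ _ (Finset.mem_univ j₀)]; exact hDrow
          have h2 : 0 ≤ ∑ k ∈ Finset.univ.erase j₀, Dm t₀ j₀ k :=
            Finset.sum_nonneg fun k hk => hDoff j₀ k (Ne.symm (Finset.ne_of_mem_erase hk))
          linarith
        have hsplit : ∑ i, μ t₀ i * Dm t₀ i j₀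
            = μ t₀ j₀ * Dm t₀ j₀ j₀ + ∑ i ∈ Finset.univ.erase j₀, μ t₀ i * Dm t₀ i j₀ :=
          (Finset.add_sum_erase _ _ (Finset.mem_univ j₀)).symm
        have h1 : 0 ≤ μ t₀ j₀ * Dm t₀ j₀ j₀ := by
          rw [hμj₀]
          nlinarith [mul_nonneg hcpos.le (neg_nonneg.2 hDjj)]
        have h2 : ∑ i ∈ Finset.univ.erase j₀, (-c) * Dm t₀ i j₀
            ≤ ∑ i ∈ Finset.univ.erase j₀, μ t₀ i * Dm t₀ i j₀ := by
          refine Finset.sum_le_sum fun i hi => ?_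
          exact mul_le_mul_of_nonneg_right (hμlb i)
            (hDoff i j₀ (Finset.ne_of_mem_erase hi))
        have h3 : ∑ i ∈ Finset.univ.erase j₀, (-c) * Dm t₀ i j₀
            = -c * ∑ i ∈ Finset.univ.erase j₀, Dm t₀ i j₀ := by
          rw [Finset.mul_sum]
        have h4 : -c * ∑ i ∈ Finset.univ.erase j₀, Dm t₀ i j₀ ≥ -c * (C - 1) := by
          apply mul_le_mul_of_nonpos_left (hColbd t₀ ht₀Icc j₀) (by linarith)
        have h5 : ε * (Real.exp (C * t₀) * C) = c * C := by rw [hc]; ring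
        rw [hsplit, h5]
        nlinarith
      -- contradiction via slope from the left
      have hslope := hasDerivWithinAt_iff_tendsto_slope.1 hd1
      have hsub2 : Set.Ico (0:ℝ) t₀ ⊆ Set.Ici (0:ℝ) \ {t₀} := fun s hs =>
        ⟨hs.1, by simp [ne_of_lt hs.2]⟩
      have htend2 : Filter.Tendsto (slope (g j₀) t₀) (𝓝[Set.Ico (0:ℝ) t₀] t₀)
          (𝓝 ((∑ i, μ t₀ i * Dm t₀ i j₀) + ε * (Real.exp (C * t₀) * C))) :=
        hslope.mono_left (nhdsWithin_mono _ hsub2)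
      have hle : (∑ i, μ t₀ i * Dm t₀ i j₀) + ε * (Real.exp (C * t₀) * C) ≤ 0 := by
        refine le_of_tendsto htend2 (Filter.eventually_of_mem self_mem_nhdsWithin
          fun s hs => ?_)
        have h1 : 0 < g j₀ s := hbefore s hs j₀
        have h2 : s - t₀ < 0 := by linarith [hs.2]
        rw [slope_def_field, hgj₀0, sub_zero]
        exact div_nonpos_iff.mpr (Or.inl ⟨h1.le, by linarith⟩)
      linarith
    -- conclude: μ t j ≥ 0
    by_contra hneg
    push_neg at hneg
    have hexp : 0 < Real.exp (C * t) := Real.exp_pos _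
    set ε : ℝ := -μ t j / (2 * Real.exp (C * t)) with hε
    have hεpos : 0 < ε := div_pos (by linarith) (by linarith)
    have := key ε hεpos t (right_mem_Icc.2 ht0) j
    have hcomp : ε * Real.exp (C * t) = -μ t j / 2 := by
      field_simp [hε]
      rw [hε]; field_simp
    rw [hcomp] at this
    linarith
  · -- sum is 1
    set S : ℝ → ℝ := fun s => ∑ k, μ s k with hS
    have hSc : ContinuousOn S (Set.Icc 0 t) :=
      (continuousOn_finset_sum _ fun k _ => (hcμ k)).mono Icc_subset_Ici_self
    have hSd : ∀ s ∈ Set.Ico (0:ℝ) t, HasDerivWithinAt S 0 (Set.Ici s) s := by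
      intro s hs
      have hs' : s ∈ Set.Ici (0:ℝ) := hs.1
      have h1 : HasDerivWithinAt S (∑ k, ∑ i, μ s i * Dm s i k) (Set.Ici 0) s :=
        HasDerivWithinAt.fun_sum fun k _ => hco k s hs'
      have h2 : (∑ k, ∑ i, μ s i * Dm s i k) = 0 := by
        rw [Finset.sum_comm]
        have := (hgen s hs').2
        simp_rw [← Finset.mul_sum]
        simp [this]
      rw [h2] at h1
      exact h1.mono (Set.Ici_subset_Ici.2 hs.1)
    have := constant_of_has_deriv_right_zero hSc hSd t (right_mem_Icc.2 ht0)
    simpa [hS, hμ0sum] using this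
end
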